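/- arXiv:math/9603213 — 7 statements merged into one kernel-verified Lean document; each statement's English description precedes it below -/
import Mathlib

section
/- Let s ≥ 1, let x₀ ∈ ℝⁿ, let U ⊂ ℂⁿ be an open set containing x₀, and let u : U ∩ ℝⁿ → ℂ. Suppose there are constants C, δ > 0 such that for every λ ≥ 1 there is a decomposition u = g_λ + h_λ on U ∩ ℝⁿ with g_λ holomorphic on U, |g_λ(z)| ≤ C e^{Cλ|Im z|} for all z ∈ U, and |h_λ(x)| ≤ C e^{−δλ^{1/s}} for all x ∈ U ∩ ℝⁿ. Then there exist an open set U'' ⊆ U containing x₀ and constants C', δ' > 0 such that for every λ ≥ 1 there is a decomposition u = g + h on U'' ∩ ℝⁿ where g is holomorphic on U''_λ = {z ∈ U'' : |Im z| ≤ λ^{−(s−1)/s}} with |g(z)| ≤ C' for all z ∈ U''_λ, and |h(x)| ≤ C' e^{−δ'λ^{1/s}} for all x ∈ U'' ∩ ℝⁿ. -/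
open MeasureTheory Complex

noncomputable section

/-- The Japanese bracket `⟨ξ⟩ = (1 + |ξ|²)^{1/2}` with the Euclidean norm. -/
def jbr {n : ℕ} (ξ : Fin n → ℝ) : ℝ := Real.sqrt (1 + ∑ j, ξ j ^ 2)

/-- Euclidean norm on `ℝⁿ`. -/
def enorm' {n : ℕ} (x : Fin n → ℝ) : ℝ := Real.sqrt (∑ j, x j ^ 2)

/-- Euclidean norm of the vector of imaginary parts of `z ∈ ℂⁿ`. -/
def imNorm {n : ℕ} (z : Fin n → ℂ) : ℝ := Real.sqrt (∑ j, (z j).im ^ 2)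

/-- Canonical embedding `ℝⁿ → ℂⁿ`. -/
def toC {n : ℕ} (x : Fin n → ℝ) : Fin n → ℂ := fun j => (x j : ℂ)

/-- The modified FBI transform `F_γ u(x, ξ)` (real `x`). -/
def FBI {n : ℕ} (γ : ℝ) (u : (Fin n → ℝ) → ℂ) (x ξ : Fin n → ℝ) : ℂ :=
  ∫ y : Fin n → ℝ,
    u y * Complex.exp (Complex.I * (∑ j, ((x j : ℂ) - (y j : ℂ)) * (ξ j : ℂ))
        - ((jbr ξ ^ γ : ℝ) : ℂ) * ∑ j, ((x j : ℂ) - (y j : ℂ)) ^ 2)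
      * (1 + Complex.I * (γ : ℂ) * (∑ j, ((x j : ℂ) - (y j : ℂ)) * (ξ j : ℂ))
          * ((jbr ξ ^ (γ - 2) : ℝ) : ℂ))

/-- The entire extension of the modified FBI transform to `z ∈ ℂⁿ`. -/
def FBIC {n : ℕ} (γ : ℝ) (u : (Fin n → ℝ) → ℂ) (z : Fin n → ℂ) (ξ : Fin n → ℝ) : ℂ :=
  ∫ y : Fin n → ℝ,
    u y * Complex.exp (Complex.I * (∑ j, (z j - (y j : ℂ)) * (ξ j : ℂ))
        - ((jbr ξ ^ γ : ℝ) : ℂ) * ∑ j, (z j - (y j : ℂ)) ^ 2)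
      * (1 + Complex.I * (γ : ℂ) * (∑ j, (z j - (y j : ℂ)) * (ξ j : ℂ))
          * ((jbr ξ ^ (γ - 2) : ℝ) : ℂ))

/-- Partial derivative in the `j`-th coordinate direction. -/
def pd {n : ℕ} (j : Fin n) (f : (Fin n → ℝ) → ℂ) : (Fin n → ℝ) → ℂ :=
  fun x => deriv (fun t : ℝ => f (Function.update x j t)) (x j)

/-- The multi-index partial derivative `∂^α`. -/
def mderiv {n : ℕ} (α : Fin n → ℕ) (f : (Fin n → ℝ) → ℂ) : (Fin n → ℝ) → ℂ :=
  (List.finRange n).foldr (fun j g => (pd j)^[α j] g) f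

/-- The Gevrey bound `C^{k+1} k^{sk}` (with the convention `0^0 = 1`). -/
def gevBound (s C : ℝ) (k : ℕ) : ℝ := C ^ (k + 1) * (k : ℝ) ^ (s * k)

/-- The operator `L = ∂_x² + x^{2(p−1)} ∂_{t₁}² + x^{2(q−1)} ∂_{t₂}²` on `ℝ³`,
with coordinates `(x, t₁, t₂) = (v 0, v 1, v 2)`. -/
def Lop (p q : ℕ) (u : (Fin 3 → ℝ) → ℂ) : (Fin 3 → ℝ) → ℂ :=
  fun v => pd 0 (pd 0 u) v
    + ((v 0 ^ (2 * (p - 1)) : ℝ) : ℂ) * pd 1 (pd 1 u) v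
    + ((v 0 ^ (2 * (q - 1)) : ℝ) : ℂ) * pd 2 (pd 2 u) v

/-- `w(x, τ)` from the weighted Sobolev norms. -/
def wfun (p q : ℕ) (x : ℝ) (τ : Fin 2 → ℝ) : ℝ :=
  Real.sqrt (|τ 0| ^ ((2 : ℝ) / p) + τ 0 ^ 2 * x ^ (2 * (p - 1))
    + |τ 1| ^ ((2 : ℝ) / q) + τ 1 ^ 2 * x ^ (2 * (q - 1)))

/-- The ordinary differential operator `A_τ`. -/
def Atau (p q : ℕ) (τ : Fin 2 → ℝ) (f : ℝ → ℂ) : ℝ → ℂ :=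
  fun x => deriv (deriv f) x
    - ((τ 0 ^ 2 * x ^ (2 * (p - 1)) + τ 1 ^ 2 * x ^ (2 * (q - 1)) : ℝ) : ℂ) * f x

end

set_option maxHeartbeats 4000000

section TC
open Complex Metric Set Filter

lemma phi_norm (f : ℂ → ℂ) (a ε : ℝ) (w : ℂ) :
    ‖f w * Complex.exp ((a:ℂ) * Complex.I * Complex.log ((1+w)/(1-w))) * (1 - w^2) ^ (ε:ℂ)‖
      = ‖f w‖ * Real.exp (-(a * (Complex.log ((1+w)/(1-w))).im))
          * ‖1 - w^2‖ ^ ε := by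
  rw [norm_mul, norm_mul]
  congr 1
  · congr 1
    rw [Complex.norm_exp]
    congr 1
    simp [Complex.mul_re, Complex.mul_im]
  · rw [Complex.norm_cpow_real]

lemma ratio_im (w : ℂ) : ((1+w)/(1-w)).im = 2 * w.im / Complex.normSq (1-w) := by
  rw [Complex.div_im]
  simp [Complex.add_im, Complex.sub_im, Complex.add_re, Complex.sub_re]
  ring

lemma ratio_re (w : ℂ) : ((1+w)/(1-w)).re = (1 - Complex.normSq w) / Complex.normSq (1-w) := by
  rw [Complex.div_re]
  simp [Complex.add_im, Complex.sub_im, Complex.add_re, Complex.sub_re, Complex.normSq_apply]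
  ring

lemma two_constants (f : ℂ → ℂ) (m M : ℝ) (hm : 0 < m) (hmM : m ≤ M)
    (hd : DifferentiableOn ℂ f (Metric.closedBall 0 1))
    (hMb : ∀ w ∈ Metric.closedBall (0:ℂ) 1, ‖f w‖ ≤ M)
    (hmb : ∀ t : ℝ, |t| ≤ 1 → ‖f (t:ℂ)‖ ≤ m)
    (t : ℝ) (ht0 : 0 ≤ t) (ht : t ≤ 1/2) :
    ‖f ((t:ℂ) * Complex.I)‖ ≤ m * (M/m) ^ (2*t) := by
  have hM : 0 < M := lt_of_lt_of_le hm hmM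
  rcases eq_or_lt_of_le ht0 with h0 | h0
  · rw [← h0]
    simp only [Complex.ofReal_zero, zero_mul, mul_zero, Real.rpow_zero, mul_one]
    simpa using hmb 0 (by norm_num)
  set c : ℝ := Real.log (M/m) with hc
  have hc0 : 0 ≤ c := Real.log_nonneg (by rw [le_div_iff₀ hm]; linarith)
  set a : ℝ := 2*c/Real.pi with ha
  have ha0 : 0 ≤ a := by positivity
  set L : ℂ → ℂ := fun w => Complex.log ((1+w)/(1-w)) with hL
  set S : Set ℂ := Metric.ball 0 1 ∩ {w | 0 < w.im} with hS
  have hSopen : IsOpen S := Metric.isOpen_ball.inter (isOpen_lt continuous_const Complex.continuous_im)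
  have hSbd : Bornology.IsBounded S := Metric.isBounded_ball.subset Set.inter_subset_left
  set K : Set ℂ := Metric.closedBall 0 1 ∩ {w | 0 ≤ w.im} with hK
  have hclos : closure S ⊆ K := by
    apply closure_minimal
    · exact Set.inter_subset_inter Metric.ball_subset_closedBall
        (fun w hw => le_of_lt (Set.mem_setOf_eq ▸ hw))
    · exact Metric.isClosed_closedBall.inter (isClosed_le continuous_const Complex.continuous_im)
  have hImL : ∀ w ∈ K, 0 ≤ (L w).im := by
    intro w hw
    have him : (0:ℝ) ≤ w.im := hw.2
    rw [hL]
    simp only [Complex.log_im]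
    rw [Complex.arg_nonneg_iff, ratio_im]
    exact div_nonneg (by linarith) (Complex.normSq_nonneg _)
  -- |w.re| ≤ 1 for w in closed ball
  have hre1 : ∀ w : ℂ, w ∈ Metric.closedBall (0:ℂ) 1 → |w.re| ≤ 1 := by
    intro w hw
    have hb : ‖w‖ ≤ 1 := by simpa using mem_closedBall_iff_norm.mp hw
    exact le_trans (Complex.abs_re_le_norm w) hb
  -- slit plane facts
  have hslit1 : ∀ w ∈ K, w ≠ 1 → w ≠ -1 → (1+w)/(1-w) ∈ Complex.slitPlane := by
    intro w hw hw1 hw2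
    have hsub : (1:ℂ) - w ≠ 0 := sub_ne_zero.mpr (Ne.symm hw1)
    have hns : 0 < Complex.normSq (1-w) := Complex.normSq_pos.mpr hsub
    rcases eq_or_lt_of_le (show (0:ℝ) ≤ w.im from hw.2) with him | him
    · left
      rw [ratio_re]
      have hre : |w.re| ≤ 1 := hre1 w hw.1
      have hne : w.re ≠ 1 := fun h => hw1 (Complex.ext h him.symm)
      have hne' : w.re ≠ -1 := fun h => hw2 (by apply Complex.ext <;> simp [h, ← him])
      have h1 : w.re < 1 := lt_of_le_of_ne (abs_le.mp hre).2 hne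
      have h2 : -1 < w.re := lt_of_le_of_ne (abs_le.mp hre).1 (Ne.symm hne')
      have hnsq : Complex.normSq w = w.re^2 := by
        rw [Complex.normSq_apply, ← him]; ring
      rw [hnsq]
      apply div_pos (by nlinarith) hns
    · right
      rw [ratio_im]
      have : 0 < 2 * w.im / Complex.normSq (1-w) := div_pos (by linarith) hns
      exact ne_of_gt this
  have hslit2 : ∀ w ∈ K, w ≠ 1 → w ≠ -1 → (1 - w^2) ∈ Complex.slitPlane := by
    intro w hw hw1 hw2
    have hsqre : (w^2).re = w.re^2 - w.im^2 := by rw [pow_two, Complex.mul_re]; ring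
    have hsqim : (w^2).im = 2 * w.re * w.im := by rw [pow_two, Complex.mul_im]; ring
    rcases eq_or_lt_of_le (show (0:ℝ) ≤ w.im from hw.2) with him | him
    · left
      have hre : |w.re| ≤ 1 := hre1 w hw.1
      have hne : w.re ≠ 1 := fun h => hw1 (Complex.ext h him.symm)
      have hne' : w.re ≠ -1 := fun h => hw2 (by apply Complex.ext <;> simp [h, ← him])
      have h1 : w.re < 1 := lt_of_le_of_ne (abs_le.mp hre).2 hne
      have h2 : -1 < w.re := lt_of_le_of_ne (abs_le.mp hre).1 (Ne.symm hne')
      have : (1 - w^2).re = 1 - w.re^2 + w.im^2 := by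
        rw [Complex.sub_re, Complex.one_re, hsqre]; ring
      rw [this]
      nlinarith
    · by_cases hzz : (1 - w^2).im = 0
      · left
        have : 2 * w.re * w.im = 0 := by
          have h := hzz
          rw [Complex.sub_im, Complex.one_im, hsqim] at h
          linarith
        have hre0 : w.re = 0 := by
          rcases mul_eq_zero.mp this with h | h
          · rcases mul_eq_zero.mp h with h | h
            · norm_num at h
            · exact h
          · exfalso; linarith
        have : (1 - w^2).re = 1 - w.re^2 + w.im^2 := by
          rw [Complex.sub_re, Complex.one_re, hsqre]; ring
        rw [this, hre0]
        nlinarith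
      · right; exact hzz
  -- the ε-regularized estimate
  have key : ∀ ε : ℝ, 0 < ε →
      ‖f ((t:ℂ)*Complex.I)‖ * Real.exp (-(a * (L ((t:ℂ)*Complex.I)).im))
        * ‖1 - ((t:ℂ)*Complex.I)^2‖ ^ ε ≤ m * 2 ^ ε := by
    intro ε hε
    set Φ : ℂ → ℂ := fun w => f w * Complex.exp ((a:ℂ) * Complex.I * L w) * (1 - w^2) ^ (ε:ℂ)
      with hΦ
    have hΦnorm : ∀ w : ℂ, ‖Φ w‖ = ‖f w‖ * Real.exp (-(a * (L w).im))
        * ‖1 - w^2‖ ^ ε := fun w => phi_norm f a ε w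
    -- uniform bound on K
    have hbd : ∀ w ∈ K, ‖Φ w‖ ≤ M * ‖1 - w^2‖ ^ ε := by
      intro w hw
      rw [hΦnorm]
      have h1 : Real.exp (-(a * (L w).im)) ≤ 1 := by
        rw [Real.exp_le_one_iff]
        have := hImL w hw
        nlinarith
      have h2 : ‖f w‖ ≤ M := hMb w hw.1
      have h3 : (0:ℝ) ≤ ‖1 - w^2‖ ^ ε := Real.rpow_nonneg (norm_nonneg _) _
      calc ‖f w‖ * Real.exp (-(a * (L w).im)) * ‖1 - w^2‖ ^ ε
          ≤ (M * 1) * (‖1 - w^2‖ ^ ε) := by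
            apply mul_le_mul_of_nonneg_right _ h3
            exact mul_le_mul h2 h1 (Real.exp_pos _).le hM.le
        _ = M * ‖1 - w^2‖ ^ ε := by ring
    -- frontier bound
    have hfr : ∀ w ∈ frontier S, ‖Φ w‖ ≤ m * 2 ^ ε := by
      intro w hwf
      have hwc : w ∈ closure S := frontier_subset_closure hwf
      have hwK : w ∈ K := hclos hwc
      have hwns : w ∉ S := by
        rw [hSopen.frontier_eq] at hwf; exact hwf.2
      have habs2 : ‖1 - w^2‖ ≤ 2 := by
        calc ‖(1:ℂ) - w^2‖ ≤ ‖(1:ℂ)‖ + ‖w^2‖ := norm_sub_le _ _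
          _ = 1 + ‖w‖^2 := by rw [norm_one, norm_pow]
          _ ≤ 2 := by
              have : ‖w‖ ≤ 1 := by simpa using mem_closedBall_iff_norm.mp hwK.1
              nlinarith [norm_nonneg w]
      have habse : ‖1 - w^2‖ ^ ε ≤ 2 ^ ε :=
        Real.rpow_le_rpow (norm_nonneg _) habs2 hε.le
      have h3 : (0:ℝ) ≤ ‖1 - w^2‖ ^ ε := Real.rpow_nonneg (norm_nonneg _) _
      rcases eq_or_lt_of_le (show (0:ℝ) ≤ w.im from hwK.2) with him | him
      · -- real boundary point
        have hwr : w = ((w.re : ℝ) : ℂ) := Complex.ext (by simp) (by simp [← him])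
        have hfm : ‖f w‖ ≤ m := by rw [hwr]; exact hmb w.re (hre1 w hwK.1)
        have h1 : Real.exp (-(a * (L w).im)) ≤ 1 := by
          rw [Real.exp_le_one_iff]; nlinarith [hImL w hwK]
        rw [hΦnorm]
        calc ‖f w‖ * Real.exp (-(a * (L w).im)) * ‖1 - w^2‖ ^ ε
            ≤ (m * 1) * (2 ^ ε) := by
              apply mul_le_mul _ habse h3 (by positivity)
              exact mul_le_mul hfm h1 (Real.exp_pos _).le hm.le
          _ = m * 2 ^ ε := by ring
      · -- circle boundary point
        have hwball : w ∉ Metric.ball (0:ℂ) 1 := fun hb => hwns ⟨hb, him⟩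
        have habs1 : ‖w‖ = 1 := by
          have h1 : ‖w‖ ≤ 1 := by
            have := mem_closedBall_iff_norm.mp hwK.1
            simpa using this
          have h2 : ¬ (‖w‖ < 1) := by
            intro hlt
            exact hwball (by simpa [Metric.mem_ball, Complex.dist_eq] using hlt)
          linarith [lt_or_ge (‖w‖) 1 |>.resolve_left h2]
        have hw1 : w ≠ 1 := by intro h; rw [h] at him; simp at him
        have hsub : (1:ℂ) - w ≠ 0 := sub_ne_zero.mpr (Ne.symm hw1)
        have hns : 0 < Complex.normSq (1-w) := Complex.normSq_pos.mpr hsub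
        have hargpi2 : (L w).im = Real.pi/2 := by
          rw [hL]
          simp only [Complex.log_im]
          rw [Complex.arg_eq_pi_div_two_iff]
          constructor
          · rw [ratio_re]
            have : Complex.normSq w = 1 := by
              rw [← Complex.sq_norm, habs1]; norm_num
            rw [this]; simp
          · rw [ratio_im]; exact div_pos (by linarith) hns
        have hexpc : Real.exp (-(a * (L w).im)) = m / M := by
          rw [hargpi2]
          have : a * (Real.pi/2) = c := by
            rw [ha]; field_simp
          rw [this, Real.exp_neg, hc, Real.exp_log (div_pos hM hm), inv_div]
        rw [hΦnorm, hexpc]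
        have h2 : ‖f w‖ ≤ M := hMb w hwK.1
        calc ‖f w‖ * (m/M) * ‖1 - w^2‖ ^ ε
            ≤ (M * (m/M)) * (2 ^ ε) := by
              apply mul_le_mul _ habse h3 (by positivity)
              exact mul_le_mul_of_nonneg_right h2 (by positivity)
          _ = m * 2 ^ ε := by field_simp
    -- differentiability on S
    have hball1 : ∀ w : ℂ, w ∈ Metric.ball (0:ℂ) 1 → ‖w‖ < 1 := by
      intro w hw; simpa [Metric.mem_ball, Complex.dist_eq] using hw
    have hdiff : DifferentiableOn ℂ Φ S := by
      intro w hw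
      apply DifferentiableAt.differentiableWithinAt
      have hwb := hball1 w hw.1
      have hwK : w ∈ K := ⟨Metric.ball_subset_closedBall hw.1, le_of_lt (show (0:ℝ) < w.im from hw.2)⟩
      have hw1 : w ≠ 1 := by intro h; rw [h] at hwb; simp at hwb
      have hw2 : w ≠ -1 := by intro h; rw [h] at hwb; simp at hwb
      have hsub : (1:ℂ) - w ≠ 0 := sub_ne_zero.mpr (Ne.symm hw1)
      have hf : DifferentiableAt ℂ f w :=
        hd.differentiableAt (Metric.closedBall_mem_nhds_of_mem hw.1)
      have hLd : DifferentiableAt ℂ L w := by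
        apply DifferentiableAt.clog
        · exact ((differentiableAt_const _).add differentiableAt_id).div
            ((differentiableAt_const _).sub differentiableAt_id) hsub
        · exact hslit1 w hwK hw1 hw2
      have hexp : DifferentiableAt ℂ (fun w => Complex.exp ((a:ℂ) * Complex.I * L w)) w :=
        (((differentiableAt_const _).mul hLd)).cexp
      have hcpow : DifferentiableAt ℂ (fun w : ℂ => (1 - w^2) ^ (ε:ℂ)) w := by
        apply DifferentiableAt.cpow
        · exact (differentiableAt_const _).sub (differentiableAt_pow 2)
        · exact differentiableAt_const _
        · exact hslit2 w hwK hw1 hw2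
      exact (hf.mul hexp).mul hcpow
    -- continuity on closure S
    have hcont : ContinuousOn Φ (closure S) := by
      intro w hw
      have hwK : w ∈ K := hclos hw
      by_cases hcor : w = 1 ∨ w = -1
      · -- corner points: Φ w = 0 and squeeze
        have hw20 : 1 - w^2 = 0 := by rcases hcor with h | h <;> rw [h] <;> ring
        have hΦ0 : Φ w = 0 := by
          rw [hΦ]
          simp only [hw20]
          rw [Complex.zero_cpow (Complex.ofReal_ne_zero.mpr hε.ne')]
          ring
        rw [ContinuousWithinAt, hΦ0]
        apply squeeze_zero_norm' (eventually_mem_nhdsWithin.mono (fun x hx => hbd x (hclos hx)))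
        have h1 : Tendsto (fun x : ℂ => ‖1-x^2‖) (nhds w) (nhds 0) := by
          have hcontabs : Continuous (fun x : ℂ => ‖1-x^2‖) := by
            apply continuous_norm.comp
            exact continuous_const.sub (continuous_pow 2)
          have := hcontabs.tendsto w
          rwa [show ‖1-w^2‖ = 0 by rw [hw20]; simp] at this
        have h2 := (Real.continuousAt_rpow_const 0 ε (Or.inr hε.le)).tendsto.comp h1
        rw [Real.zero_rpow hε.ne'] at h2
        have h3 := h2.const_mul M
        rw [mul_zero] at h3
        exact h3.mono_left nhdsWithin_le_nhds
      · push_neg at hcor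
        obtain ⟨hw1, hw2⟩ := hcor
        have hsub : (1:ℂ) - w ≠ 0 := sub_ne_zero.mpr (Ne.symm hw1)
        have hfc : ContinuousWithinAt f (closure S) w :=
          (hd.continuousOn.mono (fun x hx => (hclos hx).1)) w hw
        have hLc : ContinuousAt L w := by
          apply ContinuousAt.clog
          · exact ((continuous_const.add continuous_id).continuousAt).div
              ((continuous_const.sub continuous_id).continuousAt) hsub
          · exact hslit1 w hwK hw1 hw2
        have hexpc : ContinuousAt (fun w => Complex.exp ((a:ℂ) * Complex.I * L w)) w :=
          (Complex.continuous_exp.continuousAt).comp ((continuousAt_const.mul hLc))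
        have hcpowc : ContinuousAt (fun w : ℂ => (1 - w^2) ^ (ε:ℂ)) w := by
          apply ContinuousAt.cpow
          · exact (continuous_const.sub (continuous_pow 2)).continuousAt
          · exact continuousAt_const
          · exact hslit2 w hwK hw1 hw2
        exact (hfc.mul hexpc.continuousWithinAt).mul hcpowc.continuousWithinAt
    -- membership of the evaluation point
    have hmem : (t:ℂ)*Complex.I ∈ closure S := by
      apply subset_closure
      constructor
      · rw [Metric.mem_ball, Complex.dist_eq]
        simp only [sub_zero, norm_mul, Complex.norm_I, Complex.norm_real, Real.norm_eq_abs, mul_one]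
        rw [_root_.abs_of_nonneg ht0]; linarith
      · show (0:ℝ) < ((t:ℂ)*Complex.I).im
        simp [h0]
    have hmax := Complex.norm_le_of_forall_mem_frontier_norm_le hSbd ⟨hdiff, hcont⟩ hfr hmem
    rw [hΦnorm] at hmax
    exact hmax
  -- pass to the limit ε → 0⁺
  set w0 : ℂ := (t:ℂ)*Complex.I with hw0
  set Arg : ℝ := (L w0).im with hArgdef
  set X : ℝ := ‖f w0‖ * Real.exp (-(a * Arg)) with hX
  have h1mt : (1:ℂ) - w0^2 = (((1+t^2 : ℝ)):ℂ) := by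
    rw [hw0, mul_pow, Complex.I_sq]; push_cast; ring
  have habs : ‖1 - w0^2‖ = 1 + t^2 := by
    rw [h1mt, Complex.norm_real, Real.norm_eq_abs, _root_.abs_of_nonneg (by nlinarith)]
  have key2 : ∀ ε : ℝ, 0 < ε → X ≤ m * 2 ^ ε := by
    intro ε hε
    have hge1 : 1 ≤ ‖1 - w0^2‖ ^ ε := by
      rw [habs]
      apply Real.one_le_rpow (by nlinarith) hε.le
    have hk := key ε hε
    have hX0 : 0 ≤ X := by positivity
    calc X = X * 1 := by ring
      _ ≤ X * (‖1 - w0^2‖ ^ ε) := by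
          exact mul_le_mul_of_nonneg_left hge1 hX0
      _ ≤ m * 2 ^ ε := hk
  have hXm : X ≤ m := by
    have hfun : (fun ε : ℝ => m * (2:ℝ)^ε) = fun ε : ℝ => m * Real.exp (Real.log 2 * ε) := by
      funext ε; rw [Real.rpow_def_of_pos (by norm_num : (0:ℝ) < 2)]
    have hlim : Tendsto (fun ε : ℝ => m * (2:ℝ)^ε) (nhdsWithin 0 (Set.Ioi 0)) (nhds m) := by
      rw [hfun]
      have h2 : Tendsto (fun ε : ℝ => Real.exp (Real.log 2 * ε)) (nhds (0:ℝ)) (nhds 1) := by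
        have hc : Continuous (fun ε : ℝ => Real.exp (Real.log 2 * ε)) :=
          Real.continuous_exp.comp (continuous_const.mul continuous_id)
        have := hc.tendsto 0
        simpa using this
      have h3 := h2.const_mul m
      rw [mul_one] at h3
      exact h3.mono_left nhdsWithin_le_nhds
    apply ge_of_tendsto hlim
    filter_upwards [self_mem_nhdsWithin] with ε hε using key2 ε hε
  -- compute the argument
  set ρ : ℂ := (1+w0)/(1-w0) with hρ
  have hwre : w0.re = 0 := by rw [hw0]; simp
  have hwim : w0.im = t := by rw [hw0]; simp
  have hnsq_w : Complex.normSq w0 = t^2 := by rw [Complex.normSq_apply, hwre, hwim]; ring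
  have hnsq_d : Complex.normSq (1-w0) = 1+t^2 := by
    rw [Complex.normSq_apply, Complex.sub_re, Complex.sub_im, Complex.one_re, Complex.one_im,
      hwre, hwim]
    ring
  have hρre : ρ.re = (1-t^2)/(1+t^2) := by rw [hρ, ratio_re, hnsq_w, hnsq_d]
  have hρim : ρ.im = 2*t/(1+t^2) := by rw [hρ, ratio_im, hwim, hnsq_d]
  have hρabs : ‖ρ‖ = 1 := by
    have h1 : ‖ρ‖ ^ 2 = Complex.normSq ρ := Complex.sq_norm ρ
    have h2 : Complex.normSq ρ = 1 := by
      rw [Complex.normSq_apply, hρre, hρim]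
      field_simp
      ring
    rw [h2] at h1
    rw [← Real.sqrt_sq (norm_nonneg ρ), h1, Real.sqrt_one]
  have hargle : Complex.arg ρ ≤ Real.pi * t := by
    rw [Complex.arg_of_re_nonneg (by rw [hρre]; apply div_nonneg (by nlinarith) (by positivity))]
    rw [hρabs, div_one, hρim]
    set y : ℝ := 2*t/(1+t^2) with hy
    have hy0 : 0 ≤ y := by positivity
    have hy1 : y ≤ 1 := by rw [hy, div_le_one (by positivity)]; nlinarith
    have h1 : Real.arcsin y ≤ Real.pi/2 * y := by
      have h2 := Real.le_sin_mul hy0 hy1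
      have h3 := Real.monotone_arcsin h2
      rwa [Real.arcsin_sin (by nlinarith [Real.pi_pos]) (by nlinarith [Real.pi_pos])] at h3
    have hy2t : y ≤ 2*t := by
      rw [hy]
      apply div_le_self (by linarith) (by nlinarith)
    calc Real.arcsin y ≤ Real.pi/2*y := h1
      _ ≤ Real.pi/2*(2*t) := by nlinarith [Real.pi_pos]
      _ = Real.pi * t := by ring
  have hArg : Arg = Complex.arg ρ := by
    rw [hArgdef, hL, hρ]
    simp [Complex.log_im]
  -- finish
  have hfin : ‖f w0‖ ≤ m * Real.exp (a * Arg) := by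
    have e1 : ‖f w0‖ = X * Real.exp (a * Arg) := by
      rw [hX, mul_assoc, ← Real.exp_add]
      simp
    rw [e1]
    exact mul_le_mul_of_nonneg_right hXm (Real.exp_pos _).le
  have hexple : Real.exp (a * Arg) ≤ Real.exp (c * (2*t)) := by
    apply Real.exp_le_exp.mpr
    have h1 : a * Arg ≤ a * (Real.pi * t) := by
      apply mul_le_mul_of_nonneg_left _ ha0
      rw [hArg]; exact hargle
    have h2 : a * (Real.pi * t) = c * (2*t) := by
      rw [ha]
      field_simp
    linarith
  have hrpow : (M/m) ^ (2*t) = Real.exp (c * (2*t)) := by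
    rw [Real.rpow_def_of_pos (div_pos hM hm), hc]
  rw [hrpow]
  calc ‖f w0‖ ≤ m * Real.exp (a * Arg) := hfin
    _ ≤ m * Real.exp (c * (2*t)) := mul_le_mul_of_nonneg_left hexple hm.le

end TC

lemma imNorm_toC {n : ℕ} (x : Fin n → ℝ) : imNorm (toC x) = 0 := by
  simp [imNorm, toC]

lemma imNorm_nonneg {n : ℕ} (z : Fin n → ℂ) : 0 ≤ imNorm z := Real.sqrt_nonneg _

lemma continuous_imNorm {n : ℕ} : Continuous (imNorm (n := n)) := by
  apply Real.continuous_sqrt.comp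
  exact continuous_finset_sum _ (fun j _ => ((Complex.continuous_im.comp (continuous_apply j)).pow 2))

lemma imNorm_slice {n : ℕ} (x v : Fin n → ℝ) (w : ℂ) :
    imNorm (fun j => (x j : ℂ) + w * (v j : ℂ)) = |w.im| * enorm' v := by
  unfold imNorm enorm'
  have h : ∀ j, ((x j : ℂ) + w * (v j : ℂ)).im = w.im * v j := by intro j; simp
  simp only [h]
  rw [show ∑ j, (w.im * v j)^2 = w.im^2 * ∑ j, (v j)^2 by rw [Finset.mul_sum]; ring_nf]
  rw [Real.sqrt_mul (sq_nonneg _), Real.sqrt_sq_eq_abs]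

/-- condition (4) implies condition (5) of the characterization of Gevrey
classes: a decomposition `u = g_λ + h_λ` with `g_λ` holomorphic on a fixed complex
neighborhood `U` and `|g_λ(z)| ≤ C e^{Cλ|Im z|}` can be upgraded to one in which `g` is
holomorphic and uniformly bounded on the strip `{z ∈ U'' : |Im z| ≤ λ^{-(s-1)/s}}`. -/
theorem stmt5 {n : ℕ} (hn : 1 ≤ n) (s : ℝ) (hs : 1 ≤ s) (x₀ : Fin n → ℝ)
    (U : Set (Fin n → ℂ)) (hU : IsOpen U) (hx₀ : toC x₀ ∈ U)
    (u : (Fin n → ℝ) → ℂ) (C δ : ℝ) (hC : 0 < C) (hδ : 0 < δ)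
    (hdec : ∀ lam : ℝ, 1 ≤ lam →
      ∃ g : (Fin n → ℂ) → ℂ, ∃ h : (Fin n → ℝ) → ℂ,
        DifferentiableOn ℂ g U ∧
        (∀ z ∈ U, ‖g z‖ ≤ C * Real.exp (C * lam * imNorm z)) ∧
        (∀ x : Fin n → ℝ, toC x ∈ U →
          u x = g (toC x) + h x ∧ ‖h x‖ ≤ C * Real.exp (-δ * lam ^ (1 / s)))) :
    ∃ U'' : Set (Fin n → ℂ), U'' ⊆ U ∧ IsOpen U'' ∧ toC x₀ ∈ U'' ∧
      ∃ C' δ' : ℝ, 0 < C' ∧ 0 < δ' ∧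
        ∀ lam : ℝ, 1 ≤ lam →
          ∃ g : (Fin n → ℂ) → ℂ, ∃ h : (Fin n → ℝ) → ℂ,
            DifferentiableOn ℂ g {z ∈ U'' | imNorm z ≤ lam ^ (-(s - 1) / s)} ∧
            (∀ z ∈ {z ∈ U'' | imNorm z ≤ lam ^ (-(s - 1) / s)}, ‖g z‖ ≤ C') ∧
            (∀ x : Fin n → ℝ, toC x ∈ U'' →
              u x = g (toC x) + h x ∧ ‖h x‖ ≤ C' * Real.exp (-δ' * lam ^ (1 / s))) := by
  classical
  -- basic positivity
  have hs0 : (0:ℝ) < s := lt_of_lt_of_le one_pos hs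
  obtain ⟨R3, hR3pos, hball3⟩ := Metric.isOpen_iff.mp hU _ hx₀
  set R : ℝ := R3/3 with hRdef
  have hR : 0 < R := by positivity
  have hball : Metric.ball (toC x₀) (3*R) ⊆ U := by
    rw [hRdef]; intro z hz; apply hball3; rw [Metric.mem_ball] at *; linarith
  set β : ℝ := δ/(16*C) with hβdef
  have hβ : 0 < β := by positivity
  set aa : ℝ := min (R/4) β with haadef
  have haa : 0 < aa := lt_min (by positivity) hβ
  have haaR : aa ≤ R/4 := min_le_left _ _
  have haaβ : aa ≤ β := min_le_right _ _
  set γ : ℝ := min 1 (β ^ (s/(s-1))) with hγdef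
  have hγ : 0 < γ := lt_min one_pos (Real.rpow_pos_of_pos hβ _)
  have hγ1 : γ ≤ 1 := min_le_left _ _
  set q : ℝ := Real.exp (-(δ * Real.log 2/(2*s))) with hqdef
  have hq0 : 0 ≤ q := (Real.exp_pos _).le
  have hq1 : q < 1 := by
    rw [hqdef, Real.exp_lt_one_iff]
    have hl2 : 0 < Real.log 2 := Real.log_pos (by norm_num)
    have : 0 < δ * Real.log 2/(2*s) := by positivity
    linarith
  set δ' : ℝ := δ * (γ/2) ^ ((1:ℝ)/s) with hδ'def
  have hδ' : 0 < δ' := mul_pos hδ (Real.rpow_pos_of_pos (by positivity) _)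
  set C' : ℝ := C * Real.exp (C*aa) + 2*C*Real.exp (-δ/2) / (1 - q) + C with hC'def
  have hC' : 0 < C' := by
    have h1 : (0:ℝ) < 1 - q := by linarith
    positivity
  -- the domain U''
  set U'' : Set (Fin n → ℂ) := Metric.ball (toC x₀) R ∩ {z | imNorm z < aa} with hU''def
  have hU''U : U'' ⊆ U := fun z hz => hball (by
    have := hz.1; rw [Metric.mem_ball] at *; linarith)
  refine ⟨U'', hU''U, ?_, ?_, C', δ', hC', hδ', ?_⟩
  · exact Metric.isOpen_ball.inter (isOpen_lt continuous_imNorm continuous_const)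
  · exact ⟨Metric.mem_ball_self hR, by
      show imNorm (toC x₀) < aa
      rw [imNorm_toC]; exact haa⟩
  -- dyadic decompositions
  have hex : ∀ k : ℕ, ∃ g : (Fin n → ℂ) → ℂ, ∃ h : (Fin n → ℝ) → ℂ,
      DifferentiableOn ℂ g U ∧
      (∀ z ∈ U, ‖g z‖ ≤ C * Real.exp (C * (2:ℝ)^k * imNorm z)) ∧
      (∀ x : Fin n → ℝ, toC x ∈ U →
        u x = g (toC x) + h x ∧ ‖h x‖ ≤ C * Real.exp (-δ * ((2:ℝ)^k) ^ (1 / s))) :=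
    fun k => hdec ((2:ℝ)^k) (one_le_pow₀ one_le_two)
  choose G H hGd hGb hGH using hex
  -- notation for the dyadic scales
  have hEk : ∀ k : ℕ, (0:ℝ) < ((2:ℝ)^k) ^ ((1:ℝ)/s) := fun k =>
    Real.rpow_pos_of_pos (by positivity) _
  have hEmono : ∀ k : ℕ, ((2:ℝ)^k) ^ ((1:ℝ)/s) ≤ ((2:ℝ)^(k+1)) ^ ((1:ℝ)/s) := by
    intro k
    apply Real.rpow_le_rpow (by positivity) _ (by positivity)
    apply pow_le_pow_right₀ one_le_two (Nat.le_succ k)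
  -- Claim 1 : slice interpolation bound
  have claim1 : ∀ (k : ℕ) (z : Fin n → ℂ), dist z (toC x₀) < R → imNorm z ≤ R →
      ‖G (k+1) z - G k z‖ ≤
        (2*C*Real.exp (-δ * ((2:ℝ)^k) ^ ((1:ℝ)/s))) *
          ((2*C*Real.exp (C * (2:ℝ)^(k+1) * (2*R))) / (2*C*Real.exp (-δ * ((2:ℝ)^k) ^ ((1:ℝ)/s))))
            ^ (imNorm z / R) := by
    intro k z hzR hzim
    set x : Fin n → ℝ := fun j => (z j).re with hxdef
    set y : Fin n → ℝ := fun j => (z j).im with hydef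
    set t : ℝ := imNorm z with htdef
    have ht0 : 0 ≤ t := imNorm_nonneg z
    have hxd : dist (toC x) (toC x₀) < R := by
      rw [dist_pi_lt_iff hR] at hzR ⊢
      intro j
      have h1 := hzR j
      have h2 : dist (toC x j) (toC x₀ j) ≤ dist (z j) (toC x₀ j) := by
        rw [Complex.dist_eq, Complex.dist_eq]
        have h3 : (toC x j - toC x₀ j) = (((x j - x₀ j : ℝ)):ℂ) := by
          simp [toC]
        rw [h3, Complex.norm_real, Real.norm_eq_abs]
        have h4 : (z j - toC x₀ j).re = x j - x₀ j := by simp [toC, hxdef]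
        calc |x j - x₀ j| = |(z j - toC x₀ j).re| := by rw [h4]
          _ ≤ ‖z j - toC x₀ j‖ := Complex.abs_re_le_norm _
      linarith
    set mk : ℝ := 2*C*Real.exp (-δ * ((2:ℝ)^k) ^ ((1:ℝ)/s)) with hmkdef
    set Mk : ℝ := 2*C*Real.exp (C * (2:ℝ)^(k+1) * (2*R)) with hMkdef
    have hmk0 : 0 < mk := by positivity
    have hmkMk : mk ≤ Mk := by
      apply mul_le_mul_of_nonneg_left _ (by positivity : (0:ℝ) ≤ 2*C)
      apply Real.exp_le_exp.mpr
      have h1 := (hEk k).le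
      have h2 : (0:ℝ) < (2:ℝ)^(k+1) := by positivity
      nlinarith [mul_nonneg hδ.le h1, mul_pos (mul_pos hC h2) (by positivity : (0:ℝ) < 2*R)]
    have hrealb : ∀ x' : Fin n → ℝ, toC x' ∈ U →
        ‖G (k+1) (toC x') - G k (toC x')‖ ≤ mk := by
      intro x' hx'
      have e1 := (hGH (k+1) x' hx').1
      have e2 := (hGH k x' hx').1
      have heq : G (k+1) (toC x') - G k (toC x') = H k x' - H (k+1) x' := by
        linear_combination e2 - e1
      rw [heq]
      have b1 := (hGH k x' hx').2
      have b2 := (hGH (k+1) x' hx').2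
      have b3 : C * Real.exp (-δ * ((2:ℝ)^(k+1)) ^ ((1:ℝ)/s))
          ≤ C * Real.exp (-δ * ((2:ℝ)^k) ^ ((1:ℝ)/s)) := by
        apply mul_le_mul_of_nonneg_left _ hC.le
        apply Real.exp_le_exp.mpr
        nlinarith [hEmono k]
      calc ‖H k x' - H (k+1) x'‖ ≤ ‖H k x'‖ + ‖H (k+1) x'‖ := norm_sub_le _ _
        _ ≤ mk := by rw [hmkdef]; linarith
    by_cases hteq : t = 0
    · have hy0 : ∀ j, (z j).im = 0 := by
        intro j
        have h3 : 0 ≤ ∑ j, (z j).im^2 := Finset.sum_nonneg (fun j _ => sq_nonneg _)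
        have h1 : ∑ j, (z j).im^2 = 0 := by
          have h2 : Real.sqrt (∑ j, (z j).im^2) = 0 := hteq
          nlinarith [Real.sq_sqrt h3]
        have h4 := (Finset.sum_eq_zero_iff_of_nonneg
          (fun j _ => sq_nonneg ((z j).im))).mp h1 j (Finset.mem_univ j)
        exact pow_eq_zero_iff (two_ne_zero) |>.mp h4
      have hzx : z = toC x := by
        funext j; exact Complex.ext rfl (by simp [toC, hxdef, hy0 j])
      have hzU : toC x ∈ U := by
        rw [← hzx]; exact hball (by rw [Metric.mem_ball]; linarith)
      rw [hzx, hteq]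
      simp only [zero_div, Real.rpow_zero, mul_one]
      exact hrealb x hzU
    · have htpos : 0 < t := lt_of_le_of_ne ht0 (Ne.symm hteq)
      set v : Fin n → ℝ := fun j => y j / t with hvdef
      have hsumy2 : ∑ j, (y j)^2 = t^2 := by
        have h0 : 0 ≤ ∑ j, (y j)^2 := Finset.sum_nonneg (fun j _ => sq_nonneg _)
        have h1 : Real.sqrt (∑ j, (y j)^2) = t := by rw [htdef]; rfl
        nlinarith [Real.sq_sqrt h0]
      have hvsum : ∑ j, (v j)^2 = 1 := by
        simp only [hvdef, div_pow]
        rw [← Finset.sum_div, hsumy2]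
        field_simp
      have hvnorm : enorm' v = 1 := by
        unfold enorm'; rw [hvsum, Real.sqrt_one]
      set φ : ℂ → (Fin n → ℂ) := fun w => fun j => (x j : ℂ) + ((2*R:ℝ):ℂ) * w * (v j : ℂ)
        with hφdef
      have hφim : ∀ w : ℂ, imNorm (φ w) = (2*R) * |w.im| := by
        intro w
        have h1 := imNorm_slice x v ((((2*R:ℝ)):ℂ) * w)
        rw [show (fun j => (x j:ℂ) + ((((2*R:ℝ)):ℂ) * w) * (v j:ℂ))
          = φ w from rfl] at h1
        rw [h1, hvnorm, mul_one]
        have h2 : ((((2*R:ℝ)):ℂ) * w).im = (2*R) * w.im := by simp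
        rw [h2, abs_mul, _root_.abs_of_nonneg (by positivity : (0:ℝ) ≤ 2*R)]
      have hvle : ∀ j, |v j| ≤ 1 := by
        intro j
        have h2 : (v j)^2 ≤ 1 := by
          rw [← hvsum]
          exact Finset.single_le_sum (fun j _ => sq_nonneg (v j)) (Finset.mem_univ j)
        nlinarith [abs_nonneg (v j), _root_.sq_abs (v j)]
      have hφmaps : ∀ w : ℂ, ‖w‖ ≤ 1 → φ w ∈ Metric.ball (toC x₀) (3*R) := by
        intro w hw
        have h1 : dist (φ w) (toC x) ≤ 2*R := by
          rw [dist_pi_le_iff (by positivity)]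
          intro j
          show dist ((x j:ℂ) + ((2*R:ℝ):ℂ)*w*(v j:ℂ)) (toC x j) ≤ 2*R
          rw [Complex.dist_eq, show (x j:ℂ) + ((2*R:ℝ):ℂ)*w*(v j:ℂ) - toC x j
            = ((2*R:ℝ):ℂ)*w*(v j:ℂ) from by simp [toC]]
          rw [norm_mul, norm_mul, Complex.norm_real, Complex.norm_real, Real.norm_eq_abs, Real.norm_eq_abs]
          rw [_root_.abs_of_nonneg (by positivity : (0:ℝ) ≤ 2*R)]
          calc 2*R * ‖w‖ * |v j| ≤ 2*R * 1 * 1 := by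
                apply mul_le_mul (mul_le_mul_of_nonneg_left hw (by positivity)) (hvle j)
                  (abs_nonneg _) (by positivity)
            _ = 2*R := by ring
        rw [Metric.mem_ball]
        calc dist (φ w) (toC x₀) ≤ dist (φ w) (toC x) + dist (toC x) (toC x₀) :=
              dist_triangle _ _ _
          _ < 3*R := by linarith
      set F : ℂ → ℂ := fun w => G (k+1) (φ w) - G k (φ w) with hFdef
      have habsle : ∀ w : ℂ, w ∈ Metric.closedBall (0:ℂ) 1 → ‖w‖ ≤ 1 := by
        intro w hw
        have := Metric.mem_closedBall.mp hw
        rwa [Complex.dist_eq, sub_zero] at this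
      have hFd : DifferentiableOn ℂ F (Metric.closedBall 0 1) := by
        have hφd : Differentiable ℂ φ := by
          apply differentiable_pi.mpr
          intro j
          apply (differentiable_const _).add
          exact (differentiable_id.const_mul _).mul_const _
        apply DifferentiableOn.comp ((hGd (k+1)).sub (hGd k)) hφd.differentiableOn
        intro w hw
        exact hball (hφmaps w (habsle w hw))
      have hFM : ∀ w ∈ Metric.closedBall (0:ℂ) 1, ‖F w‖ ≤ Mk := by
        intro w hw
        have hwle : ‖w‖ ≤ 1 := habsle w hw
        have hwU : φ w ∈ U := hball (hφmaps w hwle)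
        have b1 := hGb (k+1) (φ w) hwU
        have b2 := hGb k (φ w) hwU
        have him : imNorm (φ w) ≤ 2*R := by
          rw [hφim w]
          have h3 : |w.im| ≤ 1 := le_trans (Complex.abs_im_le_norm w) hwle
          nlinarith
        have him0 : 0 ≤ imNorm (φ w) := imNorm_nonneg _
        have harg1 : C * (2:ℝ)^(k+1) * imNorm (φ w) ≤ C * (2:ℝ)^(k+1) * (2*R) := by
          apply mul_le_mul_of_nonneg_left him (by positivity)
        have harg2 : C * (2:ℝ)^k * imNorm (φ w) ≤ C * (2:ℝ)^(k+1) * (2*R) := by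
          have h2m : (2:ℝ)^k ≤ (2:ℝ)^(k+1) := pow_le_pow_right₀ one_le_two (Nat.le_succ k)
          calc C * (2:ℝ)^k * imNorm (φ w) ≤ C * (2:ℝ)^(k+1) * imNorm (φ w) := by
                apply mul_le_mul_of_nonneg_right _ him0
                apply mul_le_mul_of_nonneg_left h2m hC.le
            _ ≤ C * (2:ℝ)^(k+1) * (2*R) := harg1
        calc ‖F w‖ ≤ ‖G (k+1) (φ w)‖ + ‖G k (φ w)‖ := norm_sub_le _ _
          _ ≤ C * Real.exp (C * (2:ℝ)^(k+1) * imNorm (φ w))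
              + C * Real.exp (C * (2:ℝ)^k * imNorm (φ w)) := add_le_add b1 b2
          _ ≤ Mk := by
              rw [hMkdef]
              have e1 : Real.exp (C * (2:ℝ)^(k+1) * imNorm (φ w))
                  ≤ Real.exp (C * (2:ℝ)^(k+1) * (2*R)) := Real.exp_le_exp.mpr harg1
              have e2 : Real.exp (C * (2:ℝ)^k * imNorm (φ w))
                  ≤ Real.exp (C * (2:ℝ)^(k+1) * (2*R)) := Real.exp_le_exp.mpr harg2
              nlinarith [hC.le]
      have hFm : ∀ τ : ℝ, |τ| ≤ 1 → ‖F (τ:ℂ)‖ ≤ mk := by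
        intro τ hτ
        have hφτ : φ (τ:ℂ) = toC (fun j => x j + 2*R*τ*v j) := by
          funext j
          show (x j:ℂ) + ((2*R:ℝ):ℂ)*(τ:ℂ)*(v j:ℂ) = ((x j + 2*R*τ*v j :ℝ):ℂ)
          push_cast; ring
        have hwle : ‖(τ:ℂ)‖ ≤ 1 := by rw [Complex.norm_real, Real.norm_eq_abs]; exact hτ
        have hU' : toC (fun j => x j + 2*R*τ*v j) ∈ U := by
          rw [← hφτ]; exact hball (hφmaps _ hwle)
        show ‖G (k+1) (φ (τ:ℂ)) - G k (φ (τ:ℂ))‖ ≤ mk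
        rw [hφτ]
        exact hrealb _ hU'
      have htle : t/(2*R) ≤ 1/2 := by
        rw [div_le_iff₀ (by positivity)]
        have : aa ≤ R := by linarith
        have htR : t ≤ R := by
          rw [htdef]; linarith [hzim]
        linarith
      have happ := two_constants F mk Mk hmk0 hmkMk hFd hFM hFm (t/(2*R))
        (by positivity) htle
      have hφt : φ ((((t/(2*R):ℝ)):ℂ) * Complex.I) = z := by
        funext j
        show (x j:ℂ) + ((2*R:ℝ):ℂ) * ((((t/(2*R):ℝ)):ℂ) * Complex.I) * (v j:ℂ) = z j
        have h1 : ((2*R:ℝ):ℂ) * (((t/(2*R):ℝ)):ℂ) = ((t:ℝ):ℂ) := by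
          rw [← Complex.ofReal_mul]
          congr 1
          field_simp
        have h2 : ((t:ℝ):ℂ) * (v j:ℂ) = ((y j :ℝ):ℂ) := by
          rw [← Complex.ofReal_mul]
          congr 1
          rw [hvdef]
          field_simp
        calc (x j:ℂ) + ((2*R:ℝ):ℂ) * ((((t/(2*R):ℝ)):ℂ) * Complex.I) * (v j:ℂ)
            = (x j:ℂ) + (((2*R:ℝ):ℂ) * ((t/(2*R):ℝ):ℂ)) * (v j:ℂ) * Complex.I := by ring
          _ = (x j:ℂ) + ((y j:ℝ):ℂ) * Complex.I := by rw [h1, h2]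
          _ = z j := Complex.re_add_im (z j)
      have hexpeq : 2*(t/(2*R)) = t/R := by
        field_simp
      have hFz : F ((((t/(2*R):ℝ)):ℂ) * Complex.I) = G (k+1) z - G k z := by
        show G (k+1) (φ ((((t/(2*R):ℝ)):ℂ) * Complex.I))
          - G k (φ ((((t/(2*R):ℝ)):ℂ) * Complex.I)) = _
        rw [hφt]
      rw [hFz, hexpeq] at happ
      show ‖G (k+1) z - G k z‖ ≤ mk * (Mk/mk) ^ (t/R)
      exact happ

  -- Claim 2 : summable bound on the strip, for suitable scales
  have claim2 : ∀ (lam : ℝ), 1 ≤ lam → ∀ (k : ℕ) (z : Fin n → ℂ), z ∈ U'' →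
      imNorm z ≤ lam ^ (-(s - 1) / s) → (2:ℝ)^k ≤ γ*lam →
      (2*C*Real.exp (-δ * ((2:ℝ)^k) ^ ((1:ℝ)/s))) *
          ((2*C*Real.exp (C * (2:ℝ)^(k+1) * (2*R))) / (2*C*Real.exp (-δ * ((2:ℝ)^k) ^ ((1:ℝ)/s))))
            ^ (imNorm z / R)
        ≤ 2*C*Real.exp (-(δ/2) * ((2:ℝ)^k) ^ ((1:ℝ)/s)) := by
    intro lam hlam k z hzU'' hzstrip h2k
    have hlam0 : (0:ℝ) < lam := lt_of_lt_of_le one_pos hlam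
    set t : ℝ := imNorm z with htdef
    have ht0 : 0 ≤ t := imNorm_nonneg z
    have htaa : t < aa := hzU''.2
    set Ek : ℝ := ((2:ℝ)^k) ^ ((1:ℝ)/s) with hEkdef
    have hEk0 : 0 < Ek := Real.rpow_pos_of_pos (by positivity) _
    have hdiv : (2*C*Real.exp (C * (2:ℝ)^(k+1) * (2*R))) / (2*C*Real.exp (-δ * Ek))
        = Real.exp (C * (2:ℝ)^(k+1) * (2*R) + δ * Ek) := by
      rw [mul_div_mul_left _ _ (by positivity : (2*C:ℝ) ≠ 0), ← Real.exp_sub]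
      congr 1; ring
    have hpow : Real.exp (C * (2:ℝ)^(k+1) * (2*R) + δ * Ek) ^ (t/R)
        = Real.exp ((C * (2:ℝ)^(k+1) * (2*R) + δ * Ek) * (t/R)) := by
      rw [Real.rpow_def_of_pos (Real.exp_pos _), Real.log_exp]
    rw [hdiv, hpow, mul_assoc, ← Real.exp_add]
    have hstep : 2*C*(Real.exp (-δ * Ek + (C * (2:ℝ)^(k+1) * (2*R) + δ * Ek) * (t/R)))
        ≤ 2*C*Real.exp (-(δ/2) * Ek) := by
      apply mul_le_mul_of_nonneg_left _ (by positivity)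
      apply Real.exp_le_exp.mpr
      -- two parts of the exponent
      have htR : t/R ≤ 1/4 := by
        rw [div_le_iff₀ hR]; linarith
      have hpart2 : δ * Ek * (t/R) ≤ δ/4 * Ek := by
        have h1 : δ * Ek * (t/R) ≤ δ * Ek * (1/4) := by
          apply mul_le_mul_of_nonneg_left htR (by positivity)
        linarith
      have hsub : t * ((2:ℝ)^k) ^ ((s-1)/s) ≤ β := by
        rcases eq_or_lt_of_le hs with hseq | hsgt
        · rw [← hseq]
          norm_num
          linarith
        · have hθ : 0 < (s-1)/s := div_pos (by linarith) hs0
          have h1 : t ≤ lam ^ (-((s-1)/s)) := by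
            rw [← neg_div]; exact hzstrip
          have h2 : ((2:ℝ)^k) ^ ((s-1)/s) ≤ (γ*lam) ^ ((s-1)/s) :=
            Real.rpow_le_rpow (by positivity) h2k hθ.le
          calc t * ((2:ℝ)^k)^((s-1)/s) ≤ lam ^ (-((s-1)/s)) * (γ*lam)^((s-1)/s) :=
                mul_le_mul h1 h2 (by positivity) (by positivity)
            _ = γ^((s-1)/s) * (lam ^ (-((s-1)/s)) * lam^((s-1)/s)) := by
                rw [Real.mul_rpow hγ.le hlam0.le]; ring
            _ = γ^((s-1)/s) := by
                rw [← Real.rpow_add hlam0]; simp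
            _ ≤ (β ^ (s/(s-1)))^((s-1)/s) :=
                Real.rpow_le_rpow hγ.le (min_le_right _ _) hθ.le
            _ = β := by
                rw [← Real.rpow_mul hβ.le]
                have hs1 : s - 1 ≠ 0 := ne_of_gt (by linarith)
                rw [show (s/(s-1))*((s-1)/s) = 1 by field_simp]
                exact Real.rpow_one β
      have hsplit : (2:ℝ)^k = Ek * ((2:ℝ)^k) ^ ((s-1)/s) := by
        rw [hEkdef, ← Real.rpow_add (by positivity : (0:ℝ) < (2:ℝ)^k),
          show (1:ℝ)/s + (s-1)/s = 1 by field_simp; ring, Real.rpow_one]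
      have hpart1 : 4*C*((2:ℝ)^k)*t ≤ δ/4 * Ek := by
        have h1 : 4*C*((2:ℝ)^k)*t = 4*C*(t * ((2:ℝ)^k)^((s-1)/s))*Ek := by
          conv_lhs => rw [hsplit]
          ring
        have h2 : 4*C*(t * ((2:ℝ)^k)^((s-1)/s))*Ek ≤ 4*C*β*Ek := by
          apply mul_le_mul_of_nonneg_right _ hEk0.le
          exact mul_le_mul_of_nonneg_left hsub (by positivity)
        have h3 : 4*C*β*Ek = δ/4 * Ek := by
          rw [hβdef]; field_simp; ring
        linarith
      have hterm1 : C * (2:ℝ)^(k+1)*(2*R)*(t/R) = 4*C*((2:ℝ)^k)*t := by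
        have h2 : (2:ℝ)^(k+1) = 2 * (2:ℝ)^k := by ring
        rw [h2]; field_simp; ring
      have hexpand : (C * (2:ℝ)^(k+1) * (2*R) + δ * Ek) * (t/R)
          = C * (2:ℝ)^(k+1)*(2*R)*(t/R) + δ * Ek * (t/R) := by ring
      rw [hexpand, hterm1]
      linarith
    exact hstep

  -- main construction
  intro lam hlam
  have hlam0 : (0:ℝ) < lam := lt_of_lt_of_le one_pos hlam
  set N : ℕ := Nat.floor (Real.logb 2 (γ*lam)) with hNdef
  have hklam : ∀ k : ℕ, k < N → (2:ℝ)^k ≤ γ*lam := by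
    intro k hk
    have hr0 : (0:ℝ) ≤ Real.logb 2 (γ*lam) := by
      by_contra hneg
      push_neg at hneg
      have : N ≤ Nat.floor (0:ℝ) := Nat.floor_mono hneg.le
      simp at this
      omega
    have hNle : (N:ℝ) ≤ Real.logb 2 (γ*lam) := Nat.floor_le hr0
    have hkle : (k:ℝ) ≤ Real.logb 2 (γ*lam) := by
      have : (k:ℝ) < (N:ℝ) := by exact_mod_cast hk
      linarith
    calc (2:ℝ)^k = (2:ℝ)^((k:ℕ):ℝ) := by rw [Real.rpow_natCast]
      _ ≤ (2:ℝ)^(Real.logb 2 (γ*lam)) := Real.rpow_le_rpow_of_exponent_le one_le_two hkle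
      _ = γ*lam := Real.rpow_logb (by norm_num) (by norm_num) (by positivity)
  have h2N : γ*lam/2 ≤ (2:ℝ)^N := by
    have h1 : Real.logb 2 (γ*lam) < N + 1 := Nat.lt_floor_add_one _
    have h2 : γ*lam < (2:ℝ)^(N+1) := by
      calc γ*lam = (2:ℝ)^(Real.logb 2 (γ*lam)) := (Real.rpow_logb (by norm_num) (by norm_num) (by positivity)).symm
        _ < (2:ℝ)^(((N+1:ℕ)):ℝ) := by
            apply Real.rpow_lt_rpow_of_exponent_lt one_lt_two
            exact_mod_cast h1
        _ = (2:ℝ)^(N+1) := by rw [Real.rpow_natCast]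
    have : (2:ℝ)^(N+1) = 2 * (2:ℝ)^N := by ring
    linarith [h2.le.trans_eq this]
  refine ⟨G N, H N, ?_, ?_, ?_⟩
  · exact (hGd N).mono (fun z hz => hU''U hz.1)
  · -- the uniform bound for g on the strip
    intro z hz
    obtain ⟨hzU'', hzstrip⟩ := hz
    have hzim : imNorm z < aa := hzU''.2
    have htel : G N z = G 0 z + ∑ k ∈ Finset.range N, (G (k+1) z - G k z) := by
      rw [Finset.sum_range_sub (fun k => G k z) N]; ring
    have hsumb : ∀ k ∈ Finset.range N, ‖G (k+1) z - G k z‖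
        ≤ (2*C*Real.exp (-δ/2)) * q^k := by
      intro k hk
      rw [Finset.mem_range] at hk
      have h1 := claim1 k z (by
          have := hzU''.1; rwa [Metric.mem_ball] at this)
        (by
          have h4 : aa ≤ R := by linarith
          linarith)
      have h2 := claim2 lam hlam k z hzU'' hzstrip (hklam k hk)
      have h3 : 2*C*Real.exp (-(δ/2) * ((2:ℝ)^k) ^ ((1:ℝ)/s)) ≤ (2*C*Real.exp (-δ/2)) * q^k := by
        have hEk1 : 1 + (k:ℝ) * Real.log 2 / s ≤ ((2:ℝ)^k) ^ ((1:ℝ)/s) := by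
          have he : ((2:ℝ)^k) ^ ((1:ℝ)/s) = Real.exp ((k:ℝ) * Real.log 2 / s) := by
            rw [Real.rpow_def_of_pos (by positivity), Real.log_pow]
            ring_nf
          rw [he]
          have := Real.add_one_le_exp ((k:ℝ) * Real.log 2 / s)
          linarith
        have hexp : Real.exp (-(δ/2) * ((2:ℝ)^k) ^ ((1:ℝ)/s))
            ≤ Real.exp (-δ/2) * q^k := by
          rw [hqdef, ← Real.exp_nat_mul, ← Real.exp_add]
          apply Real.exp_le_exp.mpr
          have h5 : -(δ/2) * ((2:ℝ)^k) ^ ((1:ℝ)/s) ≤ -(δ/2) * (1 + (k:ℝ) * Real.log 2 / s) :=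
            mul_le_mul_of_nonpos_left hEk1 (by linarith)
          calc -(δ/2) * ((2:ℝ)^k) ^ ((1:ℝ)/s) ≤ -(δ/2) * (1 + (k:ℝ) * Real.log 2 / s) := h5
            _ = -δ/2 + (k:ℝ) * -(δ * Real.log 2/(2*s)) := by field_simp; ring
        calc 2*C*Real.exp (-(δ/2) * ((2:ℝ)^k) ^ ((1:ℝ)/s))
            ≤ 2*C*(Real.exp (-δ/2) * q^k) := by
              apply mul_le_mul_of_nonneg_left hexp (by positivity)
          _ = (2*C*Real.exp (-δ/2)) * q^k := by ring
      linarith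
    have hg0 : ‖G 0 z‖ ≤ C * Real.exp (C * aa) := by
      have h1 := hGb 0 z (hU''U hzU'')
      have h2 : C * (2:ℝ)^(0:ℕ) * imNorm z ≤ C * aa := by
        simp only [pow_zero, mul_one]
        apply mul_le_mul_of_nonneg_left hzim.le hC.le
      calc ‖G 0 z‖ ≤ C * Real.exp (C * (2:ℝ)^(0:ℕ) * imNorm z) := h1
        _ ≤ C * Real.exp (C * aa) := by
            apply mul_le_mul_of_nonneg_left (Real.exp_le_exp.mpr h2) hC.le
    have hgeo : ∑ k ∈ Finset.range N, q^k ≤ 1/(1-q) := by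
      have h1 : ∑ k ∈ Finset.range N, q^k = (1 - q^N)/(1 - q) := by
        rw [geom_sum_eq hq1.ne N, ← neg_div_neg_eq]
        ring_nf
      have h2 : (0:ℝ) < 1 - q := by linarith
      rw [h1, div_le_div_iff₀ h2 h2]
      nlinarith [pow_nonneg hq0 N]
    calc ‖G N z‖ = ‖G 0 z + ∑ k ∈ Finset.range N, (G (k+1) z - G k z)‖ := by rw [← htel]
      _ ≤ ‖G 0 z‖ + ‖∑ k ∈ Finset.range N, (G (k+1) z - G k z)‖ := norm_add_le _ _
      _ ≤ ‖G 0 z‖ + ∑ k ∈ Finset.range N, ‖G (k+1) z - G k z‖ := by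
          exact add_le_add_right (norm_sum_le _ _) _
      _ ≤ C * Real.exp (C * aa) + ∑ k ∈ Finset.range N, (2*C*Real.exp (-δ/2)) * q^k :=
          add_le_add hg0 (Finset.sum_le_sum hsumb)
      _ = C * Real.exp (C * aa) + (2*C*Real.exp (-δ/2)) * ∑ k ∈ Finset.range N, q^k := by
          rw [Finset.mul_sum]
      _ ≤ C * Real.exp (C * aa) + (2*C*Real.exp (-δ/2)) * (1/(1-q)) := by
          exact add_le_add_right (mul_le_mul_of_nonneg_left hgeo (by positivity)) _
      _ ≤ C' := by
          rw [hC'def]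
          have he : (2*C*Real.exp (-δ/2)) * (1/(1-q)) = 2*C*Real.exp (-δ/2)/(1-q) := by ring
          rw [he]
          linarith
  · -- decomposition and bound for h
    intro x hx
    have hxU : toC x ∈ U := hU''U hx
    refine ⟨(hGH N x hxU).1, ?_⟩
    have h1 := (hGH N x hxU).2
    have h2 : δ' * lam ^ ((1:ℝ)/s) ≤ δ * ((2:ℝ)^N) ^ ((1:ℝ)/s) := by
      have h3 : ((γ/2)*lam) ^ ((1:ℝ)/s) ≤ ((2:ℝ)^N) ^ ((1:ℝ)/s) := by
        apply Real.rpow_le_rpow (by positivity) _ (by positivity)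
        calc (γ/2)*lam = γ*lam/2 := by ring
          _ ≤ (2:ℝ)^N := h2N
      have h4 : ((γ/2)*lam) ^ ((1:ℝ)/s) = (γ/2) ^ ((1:ℝ)/s) * lam ^ ((1:ℝ)/s) :=
        Real.mul_rpow (by positivity) (by positivity)
      rw [hδ'def]
      calc δ * (γ/2) ^ ((1:ℝ)/s) * lam ^ ((1:ℝ)/s) = δ * (((γ/2)*lam) ^ ((1:ℝ)/s)) := by
            rw [h4]; ring
        _ ≤ δ * ((2:ℝ)^N) ^ ((1:ℝ)/s) := mul_le_mul_of_nonneg_left h3 hδ.le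
    have h5 : Real.exp (-δ * ((2:ℝ)^N) ^ ((1:ℝ)/s)) ≤ Real.exp (-δ' * lam ^ ((1:ℝ)/s)) := by
      apply Real.exp_le_exp.mpr; linarith
    have h6 : C ≤ C' := by
      rw [hC'def]
      have h7 : (0:ℝ) < 1 - q := by linarith
      have : 0 ≤ C * Real.exp (C*aa) := by positivity
      have : 0 ≤ 2*C*Real.exp (-δ/2) / (1 - q) := by positivity
      linarith
    have h8 : (1:ℝ)/s = 1/s := rfl
    calc ‖H N x‖ ≤ C * Real.exp (-δ * ((2:ℝ)^N) ^ ((1:ℝ)/s)) := by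
          convert h1 using 3
      _ ≤ C * Real.exp (-δ' * lam ^ ((1:ℝ)/s)) := mul_le_mul_of_nonneg_left h5 hC.le
      _ ≤ C' * Real.exp (-δ' * lam ^ ((1:ℝ)/s)) :=
          mul_le_mul_of_nonneg_right h6 (Real.exp_pos _).le
      _ = C' * Real.exp (-δ' * lam ^ (1/s)) := rfl
end

section
/- Let U ⊆ ℝⁿ be open, x₀ ∈ U, and s ≥ 1. Let V ⊆ L²(U) be a closed linear subspace such that every f ∈ V agrees almost everywhere with a smooth function on U (identified with that function), such that for every multi-index α there is a constant C_α with |∂^α f(x₀)| ≤ C_α ‖f‖_{L²(U)} for all f ∈ V, and such that every f ∈ V belongs to G^s at x₀ (i.e. for each f there is a constant C_f with |∂^α f(x₀)| ≤ C_f^{|α|+1} |α|^{s|α|} for all α). Then there exists B < ∞ such that |∂^α f(x₀)| ≤ B^{|α|+1} |α|^{s|α|} ‖f‖_{L²(U)} for every f ∈ V and every multi-index α. -/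
open MeasureTheory Complex

section Helpers
open Set
variable {n : ℕ} {U : Set (Fin n → ℝ)}

lemma update_eq (x : Fin n → ℝ) (j : Fin n) (t : ℝ) :
    Function.update x j t = x + (t - x j) • (Pi.single j 1 : Fin n → ℝ) := by
  funext i
  by_cases h : i = j
  · subst h; simp
  · simp [Function.update, h, Pi.single_eq_of_ne h]

lemma hasDerivAt_curve (x : Fin n → ℝ) (j : Fin n) (t : ℝ) :
    HasDerivAt (fun t : ℝ => Function.update x j t) (Pi.single j 1 : Fin n → ℝ) t := by
  have h : HasDerivAt (fun t : ℝ => x + (t - x j) • (Pi.single j 1 : Fin n → ℝ))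
      ((1:ℝ) • (Pi.single j 1 : Fin n → ℝ)) t :=
    (((hasDerivAt_id t).sub_const (x j)).smul_const _).const_add x
  simp only [one_smul] at h
  convert h using 1
  funext t; exact update_eq x j t

lemma hasDerivAt_slice {f : (Fin n → ℝ) → ℂ} {x : Fin n → ℝ} (j : Fin n)
    (hf : DifferentiableAt ℝ f x) :
    HasDerivAt (fun t : ℝ => f (Function.update x j t))
      (fderiv ℝ f x (Pi.single j 1 : Fin n → ℝ)) (x j) := by
  have hc := hasDerivAt_curve x j (x j)
  have hx : Function.update x j (x j) = x := Function.update_eq_self j x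
  have hF : HasFDerivAt f (fderiv ℝ f x) (Function.update x j (x j)) := by
    rw [hx]; exact hf.hasFDerivAt
  have := hF.comp_hasDerivAt (x j) hc
  exact this

lemma pd_eq_fderiv {f : (Fin n → ℝ) → ℂ} {x : Fin n → ℝ} (j : Fin n)
    (hf : DifferentiableAt ℝ f x) :
    pd j f x = fderiv ℝ f x (Pi.single j 1 : Fin n → ℝ) := (hasDerivAt_slice j hf).deriv

lemma pd_congr (hU : IsOpen U) {f g : (Fin n → ℝ) → ℂ} (j : Fin n)
    (h : EqOn f g U) : EqOn (pd j f) (pd j g) U := by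
  intro x hx
  have hcont : Continuous fun t : ℝ => Function.update x j t := by
    have := fun t => update_eq x j t
    rw [funext this]
    continuity
  have hev : (fun t : ℝ => f (Function.update x j t))
      =ᶠ[nhds (x j)] (fun t : ℝ => g (Function.update x j t)) := by
    have hopen : IsOpen {t : ℝ | Function.update x j t ∈ U} := hU.preimage hcont
    have hmem : x j ∈ {t : ℝ | Function.update x j t ∈ U} := by
      simp [Function.update_eq_self, hx]
    filter_upwards [hopen.mem_nhds hmem] with t ht
    exact h ht
  exact hev.deriv_eq

lemma pd_smooth (hU : IsOpen U) {f : (Fin n → ℝ) → ℂ} (j : Fin n)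
    (hf : ContDiffOn ℝ (⊤ : ℕ∞) f U) : ContDiffOn ℝ (⊤ : ℕ∞) (pd j f) U := by
  have hfd : ContDiffOn ℝ (⊤ : ℕ∞) (fun x => fderiv ℝ f x) U :=
    hf.fderiv_of_isOpen hU (by exact_mod_cast le_top)
  have h2 : ContDiffOn ℝ (⊤ : ℕ∞) (fun x => fderiv ℝ f x (Pi.single j 1 : Fin n → ℝ)) U :=
    hfd.clm_apply contDiffOn_const
  refine h2.congr fun x hx => ?_
  exact pd_eq_fderiv j (((hf x hx).differentiableWithinAt (by simp)).differentiableAt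
    (hU.mem_nhds hx))

lemma pd_lin (hU : IsOpen U) {f g : (Fin n → ℝ) → ℂ} (j : Fin n) (c : ℂ)
    (hf : ContDiffOn ℝ (⊤ : ℕ∞) f U) (hg : ContDiffOn ℝ (⊤ : ℕ∞) g U) :
    EqOn (pd j (fun y => c * f y + g y)) (fun y => c * pd j f y + pd j g y) U := by
  intro x hx
  have hfd : DifferentiableAt ℝ f x :=
    ((hf x hx).differentiableWithinAt (by simp)).differentiableAt (hU.mem_nhds hx)
  have hgd : DifferentiableAt ℝ g x :=
    ((hg x hx).differentiableWithinAt (by simp)).differentiableAt (hU.mem_nhds hx)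
  have h1 := ((hasDerivAt_slice j hfd).const_mul c).add (hasDerivAt_slice j hgd)
  have h2 : pd j f x = fderiv ℝ f x (Pi.single j 1 : Fin n → ℝ) := pd_eq_fderiv j hfd
  have h3 : pd j g x = fderiv ℝ g x (Pi.single j 1 : Fin n → ℝ) := pd_eq_fderiv j hgd
  show deriv _ _ = c * pd j f x + pd j g x
  exact h1.deriv.trans (by rw [← h2, ← h3])

lemma iter_congr (hU : IsOpen U) {f g : (Fin n → ℝ) → ℂ} (j : Fin n) (k : ℕ)
    (h : EqOn f g U) : EqOn ((pd j)^[k] f) ((pd j)^[k] g) U := by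
  induction k with
  | zero => simpa using h
  | succ k ih =>
    rw [Function.iterate_succ_apply', Function.iterate_succ_apply']
    exact pd_congr hU j ih

lemma iter_smooth (hU : IsOpen U) {f : (Fin n → ℝ) → ℂ} (j : Fin n) (k : ℕ)
    (hf : ContDiffOn ℝ (⊤ : ℕ∞) f U) : ContDiffOn ℝ (⊤ : ℕ∞) ((pd j)^[k] f) U := by
  induction k with
  | zero => simpa using hf
  | succ k ih =>
    rw [Function.iterate_succ_apply']
    exact pd_smooth hU j ih

lemma iter_lin (hU : IsOpen U) {f g : (Fin n → ℝ) → ℂ} (j : Fin n) (k : ℕ) (c : ℂ)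
    (hf : ContDiffOn ℝ (⊤ : ℕ∞) f U) (hg : ContDiffOn ℝ (⊤ : ℕ∞) g U) :
    EqOn ((pd j)^[k] (fun y => c * f y + g y))
      (fun y => c * (pd j)^[k] f y + (pd j)^[k] g y) U := by
  induction k with
  | zero => intro x hx; simp
  | succ k ih =>
    rw [Function.iterate_succ_apply']
    intro x hx
    have h1 : pd j ((pd j)^[k] (fun y => c * f y + g y)) x
        = pd j (fun y => c * (pd j)^[k] f y + (pd j)^[k] g y) x :=
      pd_congr hU j ih hx
    rw [Function.iterate_succ_apply', Function.iterate_succ_apply']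
    exact h1.trans (pd_lin hU j c (iter_smooth hU j k hf) (iter_smooth hU j k hg) hx)

lemma fold_congr (hU : IsOpen U) {f g : (Fin n → ℝ) → ℂ} (α : Fin n → ℕ)
    (L : List (Fin n)) (h : EqOn f g U) :
    EqOn (L.foldr (fun j g => (pd j)^[α j] g) f) (L.foldr (fun j g => (pd j)^[α j] g) g) U := by
  induction L with
  | nil => simpa using h
  | cons j L ih => exact iter_congr hU j (α j) ih

lemma fold_smooth (hU : IsOpen U) {f : (Fin n → ℝ) → ℂ} (α : Fin n → ℕ)
    (L : List (Fin n)) (hf : ContDiffOn ℝ (⊤ : ℕ∞) f U) :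
    ContDiffOn ℝ (⊤ : ℕ∞) (L.foldr (fun j g => (pd j)^[α j] g) f) U := by
  induction L with
  | nil => simpa using hf
  | cons j L ih => exact iter_smooth hU j (α j) ih

lemma fold_lin (hU : IsOpen U) {f g : (Fin n → ℝ) → ℂ} (α : Fin n → ℕ)
    (L : List (Fin n)) (c : ℂ)
    (hf : ContDiffOn ℝ (⊤ : ℕ∞) f U) (hg : ContDiffOn ℝ (⊤ : ℕ∞) g U) :
    EqOn (L.foldr (fun j g => (pd j)^[α j] g) (fun y => c * f y + g y))
      (fun y => c * L.foldr (fun j g => (pd j)^[α j] g) f y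
        + L.foldr (fun j g => (pd j)^[α j] g) g y) U := by
  induction L with
  | nil => intro x hx; simp
  | cons j L ih =>
    intro x hx
    have h1 := iter_congr hU j (α j) ih hx
    simp only [List.foldr_cons]
    exact h1.trans (iter_lin hU j (α j) c (fold_smooth hU α L hf) (fold_smooth hU α L hg) hx)

lemma eqOn_of_ae (hU : IsOpen U) {f g : (Fin n → ℝ) → ℂ}
    (hf : ContinuousOn f U) (hg : ContinuousOn g U)
    (h : f =ᵐ[MeasureTheory.volume.restrict U] g) : EqOn f g U := by
  intro x hx
  by_contra hne
  set W : Set (Fin n → ℝ) := U ∩ (fun y => f y - g y) ⁻¹' ({0}ᶜ) with hW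
  have hWopen : IsOpen W :=
    (hf.sub hg).isOpen_inter_preimage hU isOpen_compl_singleton
  have hxW : x ∈ W := ⟨hx, by simp [sub_eq_zero]; exact hne⟩
  have hWsub : W ⊆ {y | f y ≠ g y} := by
    rintro y ⟨-, hy2⟩
    simp only [Set.mem_preimage, Set.mem_compl_iff, Set.mem_singleton_iff, sub_eq_zero] at hy2
    exact hy2
  have h0 : (MeasureTheory.volume.restrict U) {y | f y ≠ g y} = 0 := h
  have h1 : (MeasureTheory.volume.restrict U) W = 0 :=
    le_antisymm (le_trans (measure_mono hWsub) h0.le) (by simp)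
  rw [Measure.restrict_apply hWopen.measurableSet,
    Set.inter_eq_left.mpr (Set.inter_subset_left)] at h1
  exact (hWopen.measure_pos MeasureTheory.volume ⟨x, hxW⟩).ne' h1

lemma mderiv_congr (hU : IsOpen U) {f g : (Fin n → ℝ) → ℂ} (α : Fin n → ℕ)
    (h : EqOn f g U) : EqOn (mderiv α f) (mderiv α g) U :=
  fold_congr hU α _ h

lemma mderiv_lin (hU : IsOpen U) {f g : (Fin n → ℝ) → ℂ} (α : Fin n → ℕ) (c : ℂ)
    (hf : ContDiffOn ℝ (⊤ : ℕ∞) f U) (hg : ContDiffOn ℝ (⊤ : ℕ∞) g U) :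
    EqOn (mderiv α (fun y => c * f y + g y))
      (fun y => c * mderiv α f y + mderiv α g y) U :=
  fold_lin hU α _ c hf hg

end Helpers

/-- the uniform-boundedness (Baire category) lemma. If `V` is a closed
subspace of `L²(U)` all of whose elements are (identified via `rep` with) smooth
functions on `U`, if for each multi-index `α` the map `f ↦ ∂^α f(x₀)` is bounded on `V`,
and if each `f ∈ V` satisfies a Gevrey-`s` bound at `x₀`, then a single constant `B`
works for all `f ∈ V`: `|∂^α f(x₀)| ≤ B^{|α|+1}|α|^{s|α|}‖f‖_{L²(U)}`. -/
theorem stmt12 {n : ℕ} (hn : 1 ≤ n) (U : Set (Fin n → ℝ)) (hU : IsOpen U)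
    (x₀ : Fin n → ℝ) (hx₀ : x₀ ∈ U) (s : ℝ) (hs : 1 ≤ s)
    (V : Submodule ℂ (MeasureTheory.Lp ℂ 2 (MeasureTheory.volume.restrict U)))
    (hV : IsClosed (V : Set (MeasureTheory.Lp ℂ 2 (MeasureTheory.volume.restrict U))))
    (rep : MeasureTheory.Lp ℂ 2 (MeasureTheory.volume.restrict U) → (Fin n → ℝ) → ℂ)
    (hrep : ∀ f ∈ V, rep f =ᵐ[MeasureTheory.volume.restrict U] (f : (Fin n → ℝ) → ℂ) ∧
      ContDiffOn ℝ (⊤ : ℕ∞) (rep f) U)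
    (hbd : ∀ α : Fin n → ℕ, ∃ Cα : ℝ, ∀ f ∈ V, ‖mderiv α (rep f) x₀‖ ≤ Cα * ‖f‖)
    (hgev : ∀ f ∈ V, ∃ Cf : ℝ, ∀ α : Fin n → ℕ,
      ‖mderiv α (rep f) x₀‖ ≤ gevBound s Cf (∑ j, α j)) :
    ∃ B : ℝ, ∀ f ∈ V, ∀ α : Fin n → ℕ,
      ‖mderiv α (rep f) x₀‖ ≤ gevBound s B (∑ j, α j) * ‖f‖ := by
  classical
  -- key linearity
  have key : ∀ (c : ℂ), ∀ f ∈ V, ∀ f' ∈ V, ∀ α : Fin n → ℕ,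
      mderiv α (rep (c • f + f')) x₀ = c * mderiv α (rep f) x₀ + mderiv α (rep f') x₀ := by
    intro c f hf f' hf' α
    obtain ⟨hae1, hsm1⟩ := hrep f hf
    obtain ⟨hae2, hsm2⟩ := hrep f' hf'
    have hmem : c • f + f' ∈ V := V.add_mem (V.smul_mem c hf) hf'
    obtain ⟨hae3, hsm3⟩ := hrep _ hmem
    have haesum : rep (c • f + f')
        =ᵐ[MeasureTheory.volume.restrict U] fun y => c * rep f y + rep f' y := by
      have h1 : ((c • f + f' : MeasureTheory.Lp ℂ 2 (MeasureTheory.volume.restrict U))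
            : (Fin n → ℝ) → ℂ)
          =ᵐ[MeasureTheory.volume.restrict U]
            fun y => c * (f : (Fin n → ℝ) → ℂ) y + (f' : (Fin n → ℝ) → ℂ) y := by
        filter_upwards [MeasureTheory.Lp.coeFn_add (c • f) f',
          MeasureTheory.Lp.coeFn_smul c f] with y hy1 hy2
        rw [hy1, Pi.add_apply, hy2, Pi.smul_apply, smul_eq_mul]
      filter_upwards [hae3, h1, hae1, hae2] with y h3 h1 ha hb
      rw [h3, h1, ha, hb]
    have heq : Set.EqOn (rep (c • f + f')) (fun y => c * rep f y + rep f' y) U :=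
      eqOn_of_ae hU hsm3.continuousOn
        (((contDiffOn_const (c := c)).mul hsm1).add hsm2).continuousOn haesum
    calc mderiv α (rep (c • f + f')) x₀
        = mderiv α (fun y => c * rep f y + rep f' y) x₀ := mderiv_congr hU α heq hx₀
      _ = c * mderiv α (rep f) x₀ + mderiv α (rep f') x₀ :=
          mderiv_lin hU α c hsm1 hsm2 hx₀
  have hzero : ∀ α : Fin n → ℕ, mderiv α (rep 0) x₀ = 0 := by
    intro α
    have := key (-1) 0 V.zero_mem 0 V.zero_mem α
    simp only [smul_zero, add_zero, neg_one_mul] at this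
    linear_combination this
  have hsmul : ∀ (c : ℂ), ∀ f ∈ V, ∀ α : Fin n → ℕ,
      mderiv α (rep (c • f)) x₀ = c * mderiv α (rep f) x₀ := by
    intro c f hf α
    have := key c f hf 0 V.zero_mem α
    rw [add_zero, hzero α, add_zero] at this
    exact this
  have hsub : ∀ f ∈ V, ∀ f' ∈ V, ∀ α : Fin n → ℕ,
      mderiv α (rep (f - f')) x₀ = mderiv α (rep f) x₀ - mderiv α (rep f') x₀ := by
    intro f hf f' hf' α
    have := key (-1) f' hf' f hf α
    rw [neg_one_smul, neg_add_eq_sub] at this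
    rw [this]; ring
  -- continuity of the evaluation functionals on V
  have hcont : ∀ α : Fin n → ℕ, Continuous fun f : ↥V => ‖mderiv α (rep ↑f) x₀‖ := by
    intro α
    obtain ⟨Cα, hCα⟩ := hbd α
    refine (LipschitzWith.of_dist_le_mul (K := Real.toNNReal Cα) ?_).continuous
    intro f g
    have h1 : dist ‖mderiv α (rep ↑f) x₀‖ ‖mderiv α (rep ↑g) x₀‖
        ≤ ‖mderiv α (rep ↑f) x₀ - mderiv α (rep ↑g) x₀‖ := by
      rw [Real.dist_eq]; exact abs_norm_sub_norm_le _ _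
    have h2 : mderiv α (rep ↑f) x₀ - mderiv α (rep ↑g) x₀
        = mderiv α (rep (↑f - ↑g)) x₀ := (hsub ↑f f.2 ↑g g.2 α).symm
    have h3 := hCα _ (V.sub_mem f.2 g.2)
    have h4 : dist f g
        = ‖(f : MeasureTheory.Lp ℂ 2 (MeasureTheory.volume.restrict U)) - ↑g‖ := by
      rw [Subtype.dist_eq, dist_eq_norm]
    calc dist ‖mderiv α (rep ↑f) x₀‖ ‖mderiv α (rep ↑g) x₀‖
        ≤ Cα * ‖(f : MeasureTheory.Lp ℂ 2 (MeasureTheory.volume.restrict U)) - ↑g‖ := by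
          rw [h2] at h1; exact h1.trans h3
      _ ≤ Real.toNNReal Cα * dist f g := by
          rw [h4]
          exact mul_le_mul_of_nonneg_right (Real.le_coe_toNNReal Cα) (norm_nonneg _)
  -- Baire category argument
  haveI : Nonempty ↥V := ⟨⟨0, V.zero_mem⟩⟩
  haveI : CompleteSpace ↥V := hV.completeSpace_coe
  haveI : BaireSpace ↥V := inferInstance
  set S : ℕ → Set ↥V := fun m =>
    {f : ↥V | ∀ α : Fin n → ℕ, ‖mderiv α (rep ↑f) x₀‖ ≤ gevBound s (m : ℝ) (∑ j, α j)}
    with hS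
  have hSclosed : ∀ m, IsClosed (S m) := by
    intro m
    have hrw : S m = ⋂ α : Fin n → ℕ,
        {f : ↥V | ‖mderiv α (rep ↑f) x₀‖ ≤ gevBound s (m : ℝ) (∑ j, α j)} := by
      ext f; simp [hS, Set.mem_iInter]
    rw [hrw]
    exact isClosed_iInter fun α => isClosed_le (hcont α) continuous_const
  have hScover : ⋃ m, S m = Set.univ := by
    ext f
    simp only [Set.mem_iUnion, Set.mem_univ, iff_true]
    obtain ⟨Cf, hCf⟩ := hgev ↑f f.2
    have hC0 : 0 ≤ Cf := by
      have h := hCf (fun _ => 0)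
      have h2 : gevBound s Cf (∑ j : Fin n, (0:ℕ)) = Cf := by
        simp [gevBound]
      rw [h2] at h
      exact le_trans (norm_nonneg _) h
    refine ⟨⌈Cf⌉₊, fun α => (hCf α).trans ?_⟩
    unfold gevBound
    refine mul_le_mul_of_nonneg_right ?_ (Real.rpow_nonneg (Nat.cast_nonneg _) _)
    exact pow_le_pow_left₀ hC0 (Nat.le_ceil Cf) _
  obtain ⟨m, f₀, hf₀⟩ := nonempty_interior_of_iUnion_of_closed hSclosed hScover
  obtain ⟨ε, hε, hball⟩ := Metric.mem_nhds_iff.mp (mem_interior_iff_mem_nhds.mp hf₀)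
  set M : ℝ := max 1 (4 / ε) with hM
  refine ⟨(m : ℝ) * M, ?_⟩
  intro f hf α
  set k := ∑ j, α j with hk
  have hg0 : 0 ≤ gevBound s (m : ℝ) k :=
    mul_nonneg (pow_nonneg (Nat.cast_nonneg m) _) (Real.rpow_nonneg (Nat.cast_nonneg k) _)
  have hmain : ‖mderiv α (rep f) x₀‖ ≤ 4 / ε * gevBound s (m : ℝ) k * ‖f‖ := by
    rcases eq_or_ne f 0 with rfl | hne
    · rw [hzero α]; simp
    · have hfpos : 0 < ‖f‖ := norm_pos_iff.mpr hne
      set t : ℝ := ε / (2 * ‖f‖) with ht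
      have htpos : 0 < t := by positivity
      set G : ↥V := ⟨((t : ℝ) : ℂ) • f, V.smul_mem _ hf⟩ with hG
      have hGnorm : ‖(G : MeasureTheory.Lp ℂ 2 (MeasureTheory.volume.restrict U))‖
          = ε / 2 := by
        show ‖((t : ℝ) : ℂ) • f‖ = ε / 2
        rw [norm_smul, Complex.norm_real, Real.norm_eq_abs, abs_of_pos htpos, ht]
        field_simp
      have hmem1 : f₀ ∈ S m := hball (Metric.mem_ball_self hε)
      have hmem2 : f₀ + G ∈ S m := by
        apply hball
        rw [Metric.mem_ball, Subtype.dist_eq, dist_eq_norm]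
        have : ((f₀ + G : ↥V) : MeasureTheory.Lp ℂ 2 (MeasureTheory.volume.restrict U))
            - ↑f₀ = ↑G := by
          rw [Submodule.coe_add]; abel
        rw [this, hGnorm]
        linarith
      have hA := hmem1 α
      have hB := hmem2 α
      have hlin : mderiv α (rep (↑f₀ + ↑G)) x₀
          = mderiv α (rep ↑f₀) x₀ + mderiv α (rep ↑G) x₀ := by
        have h := key 1 ↑G G.2 ↑f₀ f₀.2 α
        rw [one_smul, one_mul, add_comm ((G : MeasureTheory.Lp ℂ 2
          (MeasureTheory.volume.restrict U))) (↑f₀)] at h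
        rw [h]; ring
      have hcoe : ((f₀ + G : ↥V) : MeasureTheory.Lp ℂ 2 (MeasureTheory.volume.restrict U))
          = ↑f₀ + ↑G := Submodule.coe_add f₀ G
      rw [hcoe] at hB
      have hGbound : ‖mderiv α (rep ↑G) x₀‖ ≤ 2 * gevBound s (m : ℝ) k := by
        have hdiff : mderiv α (rep ↑G) x₀
            = mderiv α (rep (↑f₀ + ↑G)) x₀ - mderiv α (rep ↑f₀) x₀ := by
          rw [hlin]; ring
        rw [hdiff]
        calc ‖mderiv α (rep (↑f₀ + ↑G)) x₀ - mderiv α (rep ↑f₀) x₀‖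
            ≤ ‖mderiv α (rep (↑f₀ + ↑G)) x₀‖ + ‖mderiv α (rep ↑f₀) x₀‖ := norm_sub_le _ _
          _ ≤ 2 * gevBound s (m : ℝ) k := by rw [← hk] at hB hA; linarith
      have hGsm : mderiv α (rep ↑G) x₀ = ((t : ℝ) : ℂ) * mderiv α (rep f) x₀ :=
        hsmul _ f hf α
      rw [hGsm] at hGbound
      rw [norm_mul, Complex.norm_real, Real.norm_eq_abs, abs_of_pos htpos] at hGbound
      have hX : ‖mderiv α (rep f) x₀‖ ≤ 2 * gevBound s (m : ℝ) k / t := by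
        rw [le_div_iff₀ htpos]
        calc ‖mderiv α (rep f) x₀‖ * t = t * ‖mderiv α (rep f) x₀‖ := by ring
          _ ≤ 2 * gevBound s (m : ℝ) k := hGbound
      refine hX.trans (le_of_eq ?_)
      rw [ht]
      field_simp
      ring
  refine hmain.trans ?_
  have hBineq : 4 / ε * gevBound s (m : ℝ) k ≤ gevBound s ((m : ℝ) * M) k := by
    unfold gevBound
    rw [mul_pow]
    have h1 : 4 / ε ≤ M ^ (k + 1) :=
      le_trans (le_max_right 1 (4 / ε)) (le_self_pow₀ (le_max_left 1 _) (Nat.succ_ne_zero k))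
    have h2 : 4 / ε * (m : ℝ) ^ (k + 1) ≤ (m : ℝ) ^ (k + 1) * M ^ (k + 1) := by
      rw [mul_comm ((m:ℝ) ^ (k+1)) (M ^ (k+1))]
      exact mul_le_mul_of_nonneg_right h1 (pow_nonneg (Nat.cast_nonneg m) _)
    calc 4 / ε * ((m : ℝ) ^ (k + 1) * (k : ℝ) ^ (s * k))
        = (4 / ε * (m : ℝ) ^ (k + 1)) * (k : ℝ) ^ (s * k) := by ring
      _ ≤ ((m : ℝ) ^ (k + 1) * M ^ (k + 1)) * (k : ℝ) ^ (s * k) :=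
          mul_le_mul_of_nonneg_right h2 (Real.rpow_nonneg (Nat.cast_nonneg k) _)
  exact mul_le_mul_of_nonneg_right hBineq (norm_nonneg f)
end

section
/- For every integer m ≥ 1 there is a constant C such that for every continuously differentiable compactly supported function f : ℝ → ℝ and every λ > 0, λ^{2/m} ∫_ℝ |f(x)|² dx ≤ C ∫_ℝ |f'(x)|² dx + C λ² ∫_ℝ x^{2(m−1)} |f(x)|² dx. -/
open MeasureTheory Complex

open Set

-- integral of derivative of compactly supported C¹ function is zero
lemma integral_deriv_zero (F : ℝ → ℝ) (hF : ContDiff ℝ 1 F) (hs : HasCompactSupport F) :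
    ∫ x : ℝ, deriv F x = 0 := by
  obtain ⟨R, hR⟩ := (hs.isCompact.isBounded).subset_closedBall 0
  have hR' : tsupport F ⊆ Icc (-R) R := by rwa [Real.closedBall_eq_Icc, zero_sub, zero_add] at hR
  have hsub : Function.support (deriv F) ⊆ Ioc (-(R+1)) (R+1) := by
    intro x hx
    have : x ∈ tsupport F := support_deriv_subset hx
    have := hR' this
    constructor <;> [linarith [this.1]; linarith [this.2]]
  rw [← intervalIntegral.integral_eq_integral_of_support_subset hsub]
  rw [intervalIntegral.integral_deriv_eq_sub (fun x _ => (hF.differentiable one_ne_zero).differentiableAt)]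
  have h1 : F (R+1) = 0 := image_eq_zero_of_notMem_tsupport (fun h => by have := (hR' h).2; linarith)
  have h2 : F (-(R+1)) = 0 := image_eq_zero_of_notMem_tsupport (fun h => by have := (hR' h).1; linarith)
  · rw [h1, h2, sub_zero]
  · exact ((hF.continuous_deriv le_rfl).intervalIntegrable _ _)

lemma sq_le_aux (m : ℕ) (hm : 2 ≤ m) (x : ℝ) : x ^ 2 ≤ 1 + x ^ (2 * (m - 1)) := by
  have h : x ^ (2 * (m - 1)) = (x ^ 2) ^ (m - 1) := by rw [pow_mul]
  rw [h]
  rcases le_or_gt (x ^ 2) 1 with h1 | h1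
  · have : (0:ℝ) ≤ (x ^ 2) ^ (m - 1) := pow_nonneg (sq_nonneg x) _
    linarith
  · have : x ^ 2 ≤ (x ^ 2) ^ (m - 1) := le_self_pow₀ h1.le (by omega)
    linarith [pow_nonneg (sq_nonneg x) (m-1)]

lemma base (m : ℕ) (hm : 1 ≤ m) (f : ℝ → ℝ) (hf : ContDiff ℝ 1 f) (hs : HasCompactSupport f) :
    ∫ x : ℝ, f x ^ 2 ≤ 4 * (∫ x : ℝ, deriv f x ^ 2) + ∫ x : ℝ, x ^ (2 * (m - 1)) * f x ^ 2 := by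
  have hfc : Continuous f := hf.continuous
  have hdc : Continuous (deriv f) := hf.continuous_deriv le_rfl
  have hfd : Differentiable ℝ f := hf.differentiable one_ne_zero
  have hsq : HasCompactSupport (fun x : ℝ => f x ^ 2) := by
    exact hs.comp_left (g := fun y : ℝ => y ^ 2) (by simp)
  have hsq' : HasCompactSupport (fun x : ℝ => deriv f x ^ 2) :=
    hs.deriv.comp_left (g := fun y : ℝ => y ^ 2) (by simp)
  have hint1 : Integrable (fun x : ℝ => f x ^ 2) := ((hfc.pow 2)).integrable_of_hasCompactSupport hsq
  have hint2 : Integrable (fun x : ℝ => deriv f x ^ 2) :=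
    ((hdc.pow 2)).integrable_of_hasCompactSupport hsq'
  have hI2 : 0 ≤ ∫ x : ℝ, deriv f x ^ 2 := integral_nonneg (fun x => sq_nonneg _)
  rcases eq_or_lt_of_le hm with hm1 | hm2
  · -- m = 1
    have : m - 1 = 0 := by omega
    simp only [this, mul_zero, pow_zero, one_mul]
    linarith
  · -- m ≥ 2
    have hm2' : 2 ≤ m := hm2
    have hintw : Integrable (fun x : ℝ => x ^ (2 * (m - 1)) * f x ^ 2) := by
      refine (Continuous.mul (by fun_prop) (hfc.pow 2)).integrable_of_hasCompactSupport ?_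
      exact (hsq.mul_left)
    have hintx : Integrable (fun x : ℝ => 2 * x * f x * deriv f x) := by
      refine (by fun_prop : Continuous fun x : ℝ => 2 * x * f x * deriv f x).integrable_of_hasCompactSupport ?_
      refine HasCompactSupport.intro hs.isCompact fun x hx => ?_
      simp [image_eq_zero_of_notMem_tsupport hx]
    -- IBP: ∫ deriv (x * f x ^ 2) = 0
    have hF : ContDiff ℝ 1 (fun x : ℝ => x * f x ^ 2) := by fun_prop
    have hFs : HasCompactSupport (fun x : ℝ => x * f x ^ 2) := hsq.mul_left
    have hder : ∀ x : ℝ, deriv (fun x : ℝ => x * f x ^ 2) x = f x ^ 2 + 2 * x * f x * deriv f x := by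
      intro x
      have h1 : HasDerivAt (fun x : ℝ => x * f x ^ 2)
          (1 * f x ^ 2 + x * (2 * f x ^ 1 * deriv f x)) x :=
        (hasDerivAt_id x).mul (((hfd x).hasDerivAt).pow 2)
      rw [h1.deriv]; ring
    have hzero : (∫ x : ℝ, f x ^ 2) + ∫ x : ℝ, 2 * x * f x * deriv f x = 0 := by
      have := integral_deriv_zero (fun x : ℝ => x * f x ^ 2) hF hFs
      rw [funext hder] at this  -- maybe need simp_rw
      rw [← integral_add hint1 hintx]
      simpa using this
    have key : (∫ x : ℝ, f x ^ 2) = ∫ x : ℝ, -(2 * x * f x * deriv f x) := by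
      rw [integral_neg]; linarith
    have hbound : ∀ x : ℝ, -(2 * x * f x * deriv f x) ≤
        2 * deriv f x ^ 2 + (1/2) * (1 + x ^ (2 * (m - 1))) * f x ^ 2 := by
      intro x
      have h2 := sq_le_aux m hm2' x
      have h3 : -(2 * x * f x * deriv f x) ≤ 2 * deriv f x ^ 2 + (1/2) * x ^ 2 * f x ^ 2 := by
        nlinarith [sq_nonneg (2 * deriv f x + x * f x)]
      nlinarith [sq_nonneg (f x)]
    have hintb : Integrable (fun x : ℝ => 2 * deriv f x ^ 2 + (1/2) * (1 + x ^ (2 * (m-1))) * f x ^ 2) := by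
      apply (hint2.const_mul 2).add
      have : Integrable (fun x : ℝ => (1/2 : ℝ) * (f x ^ 2 + x ^ (2*(m-1)) * f x ^ 2)) :=
        (hint1.add hintw).const_mul _
      refine this.congr (Filter.Eventually.of_forall fun x => ?_)
      simp only [Pi.add_apply]
      ring
    have hle := integral_mono hintx.neg hintb (fun x => hbound x)
    simp only [Pi.neg_apply] at hle
    rw [key]
    have hsplit : (∫ x : ℝ, 2 * deriv f x ^ 2 + (1/2) * (1 + x ^ (2*(m-1))) * f x ^ 2)
        = 2 * (∫ x : ℝ, deriv f x ^ 2) + (1/2) * (∫ x : ℝ, f x ^ 2)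
          + (1/2) * ∫ x : ℝ, x ^ (2*(m-1)) * f x ^ 2 := by
      rw [integral_add (hint2.const_mul 2) (by
        refine ((hint1.add hintw).const_mul (1/2:ℝ)).congr (Filter.Eventually.of_forall fun x => ?_)
        simp only [Pi.add_apply]
        ring)]
      rw [integral_const_mul]
      have : (∫ x : ℝ, (1/2:ℝ) * (1 + x ^ (2*(m-1))) * f x ^ 2)
          = ∫ x : ℝ, (1/2:ℝ) * (f x ^ 2 + x ^ (2*(m-1)) * f x ^ 2) := by
        congr 1; funext x; ring
      rw [this, integral_const_mul, integral_add hint1 hintw]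
      ring
    rw [hsplit] at hle
    have hKnonneg : 0 ≤ ∫ x : ℝ, x ^ (2*(m-1)) * f x ^ 2 :=
      integral_nonneg (fun x => mul_nonneg ((even_two_mul _).pow_nonneg x) (sq_nonneg _))
    linarith [key, hle]

/-- the scaling inequality: for each `m ≥ 1` there is `C` so that for all
compactly supported `C¹` functions `f : ℝ → ℝ` and all `λ > 0`,
`λ^{2/m} ∫ f² ≤ C ∫ (f')² + C λ² ∫ x^{2(m-1)} f²`. -/
theorem stmt14 (m : ℕ) (hm : 1 ≤ m) :
    ∃ C : ℝ, ∀ f : ℝ → ℝ, ContDiff ℝ 1 f → HasCompactSupport f →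
      ∀ lam : ℝ, 0 < lam →
        lam ^ ((2 : ℝ) / m) * ∫ x : ℝ, f x ^ 2 ≤
          C * (∫ x : ℝ, deriv f x ^ 2) + C * lam ^ 2 * ∫ x : ℝ, x ^ (2 * (m - 1)) * f x ^ 2 := by
  refine ⟨4, fun f hf hs lam hlam => ?_⟩
  have hm0 : (m : ℝ) ≠ 0 := Nat.cast_ne_zero.mpr (by omega)
  set μ : ℝ := lam ^ ((1 : ℝ) / m) with hμdef
  have hμ : 0 < μ := Real.rpow_pos_of_pos hlam _
  have hfd : Differentiable ℝ f := hf.differentiable one_ne_zero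
  set g : ℝ → ℝ := fun y => f (μ⁻¹ * y) with hgdef
  have hg : ContDiff ℝ 1 g := hf.comp (contDiff_const.mul contDiff_id)
  have hgs : HasCompactSupport g := by
    have := hs.comp_smul (c := μ⁻¹) (inv_ne_zero hμ.ne')
    simpa [smul_eq_mul] using this
  have hdg : ∀ y : ℝ, deriv g y = μ⁻¹ * deriv f (μ⁻¹ * y) := by
    intro y
    have h1 : HasDerivAt g (deriv f (μ⁻¹ * y) * (μ⁻¹ * 1)) y :=
      (hfd (μ⁻¹ * y)).hasDerivAt.comp y ((hasDerivAt_id y).const_mul μ⁻¹)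
    rw [h1.deriv]; ring
  have hB := base m hm g hg hgs
  -- compute the three integrals
  have habs : |μ⁻¹⁻¹| = μ := by rw [inv_inv, abs_of_pos hμ]
  have I1 : (∫ y : ℝ, g y ^ 2) = μ * ∫ x : ℝ, f x ^ 2 := by
    show (∫ y : ℝ, f (μ⁻¹ * y) ^ 2) = μ * ∫ x : ℝ, f x ^ 2
    rw [Measure.integral_comp_mul_left (fun x : ℝ => f x ^ 2) μ⁻¹, smul_eq_mul, habs]
  have I2 : (∫ y : ℝ, deriv g y ^ 2) = μ⁻¹ * ∫ x : ℝ, deriv f x ^ 2 := by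
    have h1 : (∫ y : ℝ, deriv g y ^ 2) = ∫ y : ℝ, μ⁻¹ ^ 2 * deriv f (μ⁻¹ * y) ^ 2 := by
      congr 1; funext y; rw [hdg y]; ring
    have h2 := Measure.integral_comp_mul_left (fun x : ℝ => deriv f x ^ 2) μ⁻¹
    rw [h1, MeasureTheory.integral_const_mul, h2, habs, smul_eq_mul]
    rw [← mul_assoc]
    congr 1
    rw [sq]
    field_simp
  have I3 : (∫ y : ℝ, y ^ (2 * (m - 1)) * g y ^ 2)
      = μ ^ (2 * (m - 1) + 1) * ∫ x : ℝ, x ^ (2 * (m - 1)) * f x ^ 2 := by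
    have h1 : (∫ y : ℝ, y ^ (2 * (m - 1)) * g y ^ 2)
        = ∫ y : ℝ, μ ^ (2 * (m - 1)) * ((fun x : ℝ => x ^ (2 * (m - 1)) * f x ^ 2) (μ⁻¹ * y)) := by
      congr 1; funext y
      have hyy : μ ^ (2*(m-1)) * (μ⁻¹ * y) ^ (2*(m-1)) = y ^ (2*(m-1)) := by
        rw [← mul_pow, ← mul_assoc, mul_inv_cancel₀ hμ.ne', one_mul]
      simp only [hgdef]
      rw [← hyy]; ring
    rw [h1, MeasureTheory.integral_const_mul,
      Measure.integral_comp_mul_left (fun x : ℝ => x ^ (2 * (m - 1)) * f x ^ 2) μ⁻¹, habs, smul_eq_mul]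
    ring
  rw [I1, I2, I3] at hB
  -- multiply by μ
  have hB2 : μ ^ 2 * (∫ x : ℝ, f x ^ 2) ≤ 4 * (∫ x : ℝ, deriv f x ^ 2)
      + μ ^ (2 * m) * ∫ x : ℝ, x ^ (2 * (m - 1)) * f x ^ 2 := by
    have := mul_le_mul_of_nonneg_left hB hμ.le
    have hexp : 2 * (m - 1) + 1 + 1 = 2 * m := by omega
    calc μ ^ 2 * (∫ x : ℝ, f x ^ 2) = μ * (μ * ∫ x : ℝ, f x ^ 2) := by ring
    _ ≤ μ * (4 * (μ⁻¹ * ∫ x : ℝ, deriv f x ^ 2)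
        + μ ^ (2 * (m - 1) + 1) * ∫ x : ℝ, x ^ (2 * (m - 1)) * f x ^ 2) := this
    _ = (μ * μ⁻¹) * 4 * (∫ x : ℝ, deriv f x ^ 2)
        + μ ^ (2 * (m - 1) + 1 + 1) * ∫ x : ℝ, x ^ (2 * (m - 1)) * f x ^ 2 := by ring
    _ = 4 * (∫ x : ℝ, deriv f x ^ 2) + μ ^ (2 * m) * ∫ x : ℝ, x ^ (2 * (m - 1)) * f x ^ 2 := by
        rw [mul_inv_cancel₀ hμ.ne', hexp, one_mul]
  have hμ2 : μ ^ 2 = lam ^ ((2 : ℝ) / m) := by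
    rw [hμdef, ← Real.rpow_natCast (lam ^ ((1:ℝ)/m)) 2, ← Real.rpow_mul hlam.le]
    congr 1
    push_cast
    ring
  have hμ2m : μ ^ (2 * m) = lam ^ 2 := by
    rw [hμdef, ← Real.rpow_natCast (lam ^ ((1:ℝ)/m)) (2 * m), ← Real.rpow_mul hlam.le,
      ← Real.rpow_natCast lam 2]
    congr 1
    push_cast
    field_simp
  rw [hμ2, hμ2m] at hB2
  have hK : 0 ≤ ∫ x : ℝ, x ^ (2 * (m - 1)) * f x ^ 2 :=
    integral_nonneg (fun x => mul_nonneg ((even_two_mul _).pow_nonneg x) (sq_nonneg _))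
  nlinarith [sq_nonneg lam, mul_nonneg (sq_nonneg lam) hK]
end

section
/- Let 1 ≤ p ≤ q be integers. There is a constant C such that for every τ = (τ₁, τ₂) ∈ ℝ² with |τ| ≥ 1 and every twice continuously differentiable compactly supported f : ℝ → ℂ, ∫_ℝ [ w(x,τ)^{−2} |f''(x)|² + |f'(x)|² + w(x,τ)² |f(x)|² ] dx ≤ C ∫_ℝ |A_τ f(x)|² w(x,τ)^{−2} dx. -/
open MeasureTheory Complex

namespace Stmt15Aux

open Filter Set

lemma norm_sq_complex (z : ℂ) : ‖z‖ ^ 2 = z.re ^ 2 + z.im ^ 2 := by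
  rw [Complex.sq_norm, Complex.normSq_apply]; ring

lemma conj_mul_self_re (z : ℂ) : ((starRingEnd ℂ) z * z).re = ‖z‖ ^ 2 := by
  rw [Complex.sq_norm, Complex.normSq_apply]
  simp [Complex.mul_re]

lemma conj_mul_sub_re (z w : ℂ) (V : ℝ) : ((starRingEnd ℂ) z * (w - (V:ℂ) * z)).re
    = ((starRingEnd ℂ) z * w).re - V * ‖z‖ ^ 2 := by
  rw [mul_sub, Complex.sub_re, norm_sq_complex]
  simp [Complex.mul_re, Complex.mul_im]; ring

lemma neg_conj_mul_re_le (z w : ℂ) : -((starRingEnd ℂ) z * w).re ≤ ‖z‖ * ‖w‖ := by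
  refine le_trans (le_trans (neg_le_abs _) (Complex.abs_re_le_norm _)) ?_
  rw [norm_mul, RCLike.norm_conj]

lemma hcs_sq {f : ℝ → ℂ} (hs : HasCompactSupport f) :
    HasCompactSupport (fun x => ‖f x‖ ^ 2) :=
  hs.comp_left (g := fun z : ℂ => ‖z‖ ^ 2) (by simp)

lemma integrable_sq {f : ℝ → ℂ} (hf : Continuous f) (hs : HasCompactSupport f) :
    Integrable (fun x : ℝ => ‖f x‖ ^ 2) :=
  (hf.norm.pow 2).integrable_of_hasCompactSupport (hcs_sq hs)

lemma integrable_csq {c : ℝ → ℝ} (hc : Continuous c) {f : ℝ → ℂ}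
    (hf : Continuous f) (hs : HasCompactSupport f) :
    Integrable (fun x : ℝ => c x * ‖f x‖ ^ 2) :=
  (hc.mul (hf.norm.pow 2)).integrable_of_hasCompactSupport ((hcs_sq hs).mul_left)

lemma intervalIntegral_le_integral {g : ℝ → ℝ} (hg : Integrable g) (h0 : ∀ x, 0 ≤ g x)
    {a b : ℝ} (hab : a ≤ b) : ∫ x in a..b, g x ≤ ∫ x, g x := by
  rw [intervalIntegral.integral_of_le hab]
  exact setIntegral_le_integral hg (Eventually.of_forall h0)

lemma poincare_base {f : ℝ → ℂ} (hf : ContDiff ℝ 1 f) (hs : HasCompactSupport f) (m : ℕ) :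
    ∫ x : ℝ, ‖f x‖ ^ 2 ≤ 16 * (∫ x : ℝ, ‖deriv f x‖ ^ 2)
      + 6 * ∫ x : ℝ, x ^ (2 * m) * ‖f x‖ ^ 2 := by
  have hfc : Continuous f := hf.continuous
  have hdiff : Differentiable ℝ f := hf.differentiable one_ne_zero
  have hf'c : Continuous (deriv f) := hf.continuous_deriv le_rfl
  have hs' : HasCompactSupport (deriv f) := hs.deriv
  set g : ℝ → ℝ := fun x => ‖f x‖ ^ 2 with hgdef
  have hgc : Continuous g := hfc.norm.pow 2
  have hg0 : ∀ x, 0 ≤ g x := fun x => by positivity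
  set g' : ℝ → ℝ := fun x =>
    2 * (f x).re * (deriv f x).re + 2 * (f x).im * (deriv f x).im with hg'def
  have hgd : ∀ x, HasDerivAt g (g' x) x := by
    intro x
    have hre : HasDerivAt (fun y => (f y).re) ((deriv f x).re) x :=
      (Complex.reCLM.hasFDerivAt (x := f x)).comp_hasDerivAt x (hdiff x).hasDerivAt
    have him : HasDerivAt (fun y => (f y).im) ((deriv f x).im) x :=
      (Complex.imCLM.hasFDerivAt (x := f x)).comp_hasDerivAt x (hdiff x).hasDerivAt
    have hsum := (hre.pow 2).add (him.pow 2)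
    have heq : g = fun y => (f y).re ^ 2 + (f y).im ^ 2 :=
      funext fun y => norm_sq_complex (f y)
    rw [heq]
    convert hsum using 1
    show 2 * (f x).re * (deriv f x).re + 2 * (f x).im * (deriv f x).im = _; norm_num
    all_goals rfl
  have hg'c : Continuous g' := by fun_prop
  -- integrability
  have hNint : Integrable g := integrable_sq hfc hs
  have hDint : Integrable (fun x : ℝ => ‖deriv f x‖ ^ 2) := integrable_sq hf'c hs'
  have hTint : Integrable (fun x : ℝ => x ^ (2 * m) * ‖f x‖ ^ 2) :=
    integrable_csq (by fun_prop) hfc hs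
  set N : ℝ := ∫ x : ℝ, g x with hN
  set D : ℝ := ∫ x : ℝ, ‖deriv f x‖ ^ 2 with hD
  set T : ℝ := ∫ x : ℝ, x ^ (2 * m) * g x with hT
  have hDnn : 0 ≤ D := integral_nonneg fun x => by positivity
  have hTnn : 0 ≤ T := integral_nonneg fun x =>
    mul_nonneg ((even_two_mul m).pow_nonneg x) (hg0 x)
  -- pointwise bound on |g'|
  have hg'bd : ∀ x, |g' x| ≤ (1/4) * g x + 4 * ‖deriv f x‖ ^ 2 := by
    intro x
    rw [abs_le]
    have h1 : g x = (f x).re ^ 2 + (f x).im ^ 2 := norm_sq_complex (f x)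
    have h2 := norm_sq_complex (deriv f x)
    constructor <;>
      nlinarith [sq_nonneg ((f x).re / 2 + 2 * (deriv f x).re),
        sq_nonneg ((f x).im / 2 + 2 * (deriv f x).im),
        sq_nonneg ((f x).re / 2 - 2 * (deriv f x).re),
        sq_nonneg ((f x).im / 2 - 2 * (deriv f x).im)]
  -- choose a good point y in [1,2]
  obtain ⟨y, hy, hymin⟩ :=
    isCompact_Icc.exists_isMinOn (s := Icc (1:ℝ) 2) ⟨1, by norm_num⟩ hgc.continuousOn
  have hgyT : g y ≤ T := by
    have h1 : g y ≤ ∫ t in (1:ℝ)..2, g t := by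
      have h := intervalIntegral.integral_mono_on (by norm_num : (1:ℝ) ≤ 2)
        (intervalIntegrable_const (μ := volume) (c := g y)) (hgc.intervalIntegrable _ _)
        (fun t ht => hymin ht)
      norm_num at h
      exact h
    have h2 : ∫ t in (1:ℝ)..2, g t ≤ ∫ t in (1:ℝ)..2, t ^ (2 * m) * g t := by
      refine intervalIntegral.integral_mono_on (by norm_num) (hgc.intervalIntegrable _ _)
        ((Continuous.intervalIntegrable (by fun_prop) _ _)) (fun t ht => ?_)
      have h1t : (1:ℝ) ≤ t ^ (2 * m) := one_le_pow₀ ht.1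
      nlinarith [hg0 t]
    have h3 : ∫ t in (1:ℝ)..2, t ^ (2 * m) * g t ≤ T :=
      intervalIntegral_le_integral hTint
        (fun t => mul_nonneg ((even_two_mul m).pow_nonneg t) (hg0 t)) (by norm_num)
    linarith
  -- pointwise bound on [-1,1]
  have hA : ∀ x ∈ Icc (-1:ℝ) 1, g x ≤ g y + ((1/4) * N + 4 * D) := by
    intro x hx
    have hxy : x ≤ y := le_trans hx.2 hy.1
    have hftc : ∫ t in x..y, g' t = g y - g x :=
      intervalIntegral.integral_eq_sub_of_hasDerivAt (fun t _ => hgd t)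
        (hg'c.intervalIntegrable _ _)
    have habs : |∫ t in x..y, g' t| ≤ ∫ t in x..y, |g' t| :=
      intervalIntegral.abs_integral_le_integral_abs hxy
    have hmono : ∫ t in x..y, |g' t| ≤ ∫ t in x..y, ((1/4) * g t + 4 * ‖deriv f t‖ ^ 2) :=
      intervalIntegral.integral_mono_on hxy ((hg'c.abs).intervalIntegrable _ _)
        (Continuous.intervalIntegrable (by fun_prop) _ _) (fun t _ => hg'bd t)
    have hext : ∫ t in x..y, ((1/4) * g t + 4 * ‖deriv f t‖ ^ 2) ≤ (1/4) * N + 4 * D := by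
      have hi : Integrable (fun t : ℝ => (1/4) * g t + 4 * ‖deriv f t‖ ^ 2) :=
        (hNint.const_mul _).add (hDint.const_mul _)
      have h := intervalIntegral_le_integral hi
        (fun t => by positivity) hxy
      rw [integral_add (hNint.const_mul _) (hDint.const_mul _), integral_const_mul,
        integral_const_mul] at h
      exact h
    have : -(g y - g x) ≤ (1/4) * N + 4 * D := by
      rw [← hftc]
      calc -∫ t in x..y, g' t ≤ |∫ t in x..y, g' t| := neg_le_abs _
        _ ≤ ∫ t in x..y, |g' t| := habs
        _ ≤ _ := le_trans hmono hext
    linarith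
  -- integrate over [-1,1]
  have hI1 : ∫ x in (-1:ℝ)..1, g x ≤ 2 * (g y + ((1/4) * N + 4 * D)) := by
    have h := intervalIntegral.integral_mono_on (by norm_num : (-1:ℝ) ≤ 1)
      (hgc.intervalIntegrable _ _) (intervalIntegrable_const (μ := volume)) hA
    norm_num at h
    linarith
    -- ∫ const over -1..1 = 2 * const
  -- split the full integral
  have hsplit : N ≤ (∫ x in (-1:ℝ)..1, g x) + T := by
    have hind : Integrable ((Icc (-1:ℝ) 1).indicator g) := hNint.indicator measurableSet_Icc
    have hpt : ∀ x, g x ≤ (Icc (-1:ℝ) 1).indicator g x + x ^ (2 * m) * g x := by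
      intro x
      by_cases hx : x ∈ Icc (-1:ℝ) 1
      · rw [indicator_of_mem hx]
        nlinarith [mul_nonneg ((even_two_mul m).pow_nonneg x) (hg0 x)]
      · rw [indicator_of_notMem hx]
        have h1 : (1:ℝ) ≤ |x| := by
          rw [mem_Icc, not_and_or] at hx
          rcases hx with h | h
          · push_neg at h
            exact le_trans (by linarith) (neg_le_abs x)
          · push_neg at h
            exact le_trans (by linarith) (le_abs_self x)
        have h2 : (1:ℝ) ≤ x ^ (2 * m) := by
          rw [← (even_two_mul m).pow_abs]
          exact one_le_pow₀ h1
        nlinarith [hg0 x]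
    have hadd : ∫ a : ℝ, ((Icc (-1:ℝ) 1).indicator g a + a ^ (2 * m) * g a)
        = (∫ x in (-1:ℝ)..1, g x) + T := by
      rw [integral_add hind hTint, integral_indicator measurableSet_Icc,
        integral_Icc_eq_integral_Ioc, ← intervalIntegral.integral_of_le
          (by norm_num : (-1:ℝ) ≤ 1)]
    calc N ≤ ∫ a : ℝ, ((Icc (-1:ℝ) 1).indicator g a + a ^ (2 * m) * g a) := by
          refine integral_mono hNint ?_ hpt
          exact hind.add hTint
      _ = _ := hadd
  linarith

lemma poincare_scaled {f : ℝ → ℂ} (hf : ContDiff ℝ 1 f) (hs : HasCompactSupport f)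
    (m : ℕ) (τ : ℝ) :
    |τ| ^ ((2:ℝ) / ((m:ℝ) + 1)) * ∫ x : ℝ, ‖f x‖ ^ 2 ≤
      16 * (∫ x : ℝ, ‖deriv f x‖ ^ 2) + 6 * τ ^ 2 * ∫ x : ℝ, x ^ (2 * m) * ‖f x‖ ^ 2 := by
  have hdf : Differentiable ℝ f := hf.differentiable one_ne_zero
  rcases eq_or_ne τ 0 with rfl | hτ
  · rw [abs_zero, Real.zero_rpow (by positivity), zero_mul]
    have h1 : 0 ≤ ∫ x : ℝ, ‖deriv f x‖ ^ 2 := integral_nonneg fun x => by positivity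
    have h2 : 0 ≤ ∫ x : ℝ, x ^ (2 * m) * ‖f x‖ ^ 2 := integral_nonneg fun x =>
      mul_nonneg ((even_two_mul m).pow_nonneg x) (by positivity)
    nlinarith
  · set lam := |τ| ^ ((1:ℝ)/((m:ℝ)+1)) with hlam
    have hlam0 : 0 < lam := Real.rpow_pos_of_pos (abs_pos.mpr hτ) _
    set g : ℝ → ℂ := fun x => f (lam⁻¹ * x) with hgdef
    have hgc : ContDiff ℝ 1 g := hf.comp (contDiff_const.mul contDiff_id)
    have hgs : HasCompactSupport g := by
      simpa [smul_eq_mul] using hs.comp_smul (G₀ := ℝ) (inv_ne_zero hlam0.ne')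
    have hgderiv : deriv g = fun x => lam⁻¹ • deriv f (lam⁻¹ * x) := by
      funext x
      have h1 : HasDerivAt (fun y : ℝ => lam⁻¹ * y) lam⁻¹ x := by
        simpa using (hasDerivAt_id x).const_mul lam⁻¹
      exact (HasDerivAt.scomp x (hdf _).hasDerivAt h1).deriv
    have base := poincare_base hgc hgs m
    have e1 : ∫ x : ℝ, ‖g x‖ ^ 2 = lam * ∫ x : ℝ, ‖f x‖ ^ 2 := by
      have h := MeasureTheory.Measure.integral_comp_inv_mul_left (fun y : ℝ => ‖f y‖ ^ 2) lam
      simpa [abs_of_pos hlam0, smul_eq_mul] using h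
    have e2 : ∫ x : ℝ, ‖deriv g x‖ ^ 2 = lam⁻¹ * ∫ x : ℝ, ‖deriv f x‖ ^ 2 := by
      rw [hgderiv]
      simp only [norm_smul, norm_inv, Real.norm_eq_abs, abs_of_pos hlam0, mul_pow]
      rw [integral_const_mul]
      have h := MeasureTheory.Measure.integral_comp_inv_mul_left (fun y : ℝ => ‖deriv f y‖ ^ 2) lam
      rw [h, smul_eq_mul, abs_of_pos hlam0]
      field_simp
    have e3 : ∫ x : ℝ, x ^ (2 * m) * ‖g x‖ ^ 2
        = lam ^ (2 * m + 1) * ∫ x : ℝ, x ^ (2 * m) * ‖f x‖ ^ 2 := by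
      have h := MeasureTheory.Measure.integral_comp_inv_mul_left
        (fun y : ℝ => (lam * y) ^ (2 * m) * ‖f y‖ ^ 2) lam
      calc ∫ x : ℝ, x ^ (2 * m) * ‖g x‖ ^ 2
          = ∫ x : ℝ, (lam * (lam⁻¹ * x)) ^ (2 * m) * ‖f (lam⁻¹ * x)‖ ^ 2 := by
            congr 1; funext x
            rw [← mul_assoc, mul_inv_cancel₀ hlam0.ne', one_mul]
        _ = |lam| • ∫ y : ℝ, (lam * y) ^ (2 * m) * ‖f y‖ ^ 2 := h
        _ = lam ^ (2 * m + 1) * ∫ y : ℝ, y ^ (2 * m) * ‖f y‖ ^ 2 := by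
            rw [abs_of_pos hlam0, smul_eq_mul]
            simp only [mul_pow, mul_assoc]
            rw [integral_const_mul]
            rw [← mul_assoc, ← pow_succ']
    rw [e1, e2, e3] at base
    have key : lam ^ 2 * ∫ x : ℝ, ‖f x‖ ^ 2
        ≤ 16 * (∫ x : ℝ, ‖deriv f x‖ ^ 2) + 6 * lam ^ (2*m+2) * ∫ x : ℝ, x ^ (2*m) * ‖f x‖ ^ 2 := by
      have h := mul_le_mul_of_nonneg_left base hlam0.le
      have hinv : lam * lam⁻¹ = 1 := mul_inv_cancel₀ hlam0.ne'
      have hpow : lam ^ (2*m+2) = lam * lam ^ (2*m+1) := by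
        rw [show 2*m+2 = (2*m+1)+1 from rfl, pow_succ']
      calc lam ^ 2 * ∫ x : ℝ, ‖f x‖ ^ 2 = lam * (lam * ∫ x : ℝ, ‖f x‖ ^ 2) := by ring
        _ ≤ lam * (16 * (lam⁻¹ * ∫ x : ℝ, ‖deriv f x‖ ^ 2)
              + 6 * (lam ^ (2*m+1) * ∫ x : ℝ, x ^ (2*m) * ‖f x‖ ^ 2)) := h
        _ = 16 * ((lam * lam⁻¹) * ∫ x : ℝ, ‖deriv f x‖ ^ 2)
              + 6 * (lam * lam ^ (2*m+1)) * ∫ x : ℝ, x ^ (2*m) * ‖f x‖ ^ 2 := by ring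
        _ = _ := by rw [hinv, hpow]; ring
    have hl2 : lam ^ 2 = |τ| ^ ((2:ℝ)/((m:ℝ)+1)) := by
      rw [hlam, ← Real.rpow_natCast (|τ| ^ ((1:ℝ)/((m:ℝ)+1))) 2,
        ← Real.rpow_mul (abs_nonneg τ)]
      push_cast; ring_nf
    have hl2m : lam ^ (2*m+2) = τ ^ 2 := by
      rw [hlam, ← Real.rpow_natCast (|τ| ^ ((1:ℝ)/((m:ℝ)+1))) (2*m+2),
        ← Real.rpow_mul (abs_nonneg τ)]
      have he : (1:ℝ)/((m:ℝ)+1) * ((2*m+2 : ℕ):ℝ) = 2 := by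
        have hm1 : ((m:ℝ)+1) ≠ 0 := by positivity
        push_cast
        field_simp
      rw [he, show ((2:ℝ)) = ((2:ℕ):ℝ) by norm_num, Real.rpow_natCast, _root_.sq_abs]
    rw [hl2, hl2m] at key
    exact key

lemma ibp {f : ℝ → ℂ} (hfc : Continuous f) (hdiff : Differentiable ℝ f)
    (hf'c : Continuous (deriv f)) (hd2 : Differentiable ℝ (deriv f))
    (hf''c : Continuous (deriv (deriv f))) (hs : HasCompactSupport f) :
    ∫ x : ℝ, ((starRingEnd ℂ) (f x) * deriv (deriv f) x).re
      = - ∫ x : ℝ, ‖deriv f x‖ ^ 2 := by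
  have hs' : HasCompactSupport (deriv f) := hs.deriv
  have hs'' : HasCompactSupport (deriv (deriv f)) := hs'.deriv
  have hconjc : Continuous fun x : ℝ => (starRingEnd ℂ) (f x) := continuous_star.comp hfc
  have hconj'c : Continuous fun x : ℝ => (starRingEnd ℂ) (deriv f x) :=
    continuous_star.comp hf'c
  have hu : ∀ x, HasDerivAt (fun y => (starRingEnd ℂ) (f y)) ((starRingEnd ℂ) (deriv f x)) x :=
    fun x => ((hdiff x).hasDerivAt).star
  have hv : ∀ x, HasDerivAt (deriv f) (deriv (deriv f) x) x := fun x => (hd2 x).hasDerivAt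
  have h1 : Integrable (fun x : ℝ => (starRingEnd ℂ) (f x) * deriv (deriv f) x) :=
    (hconjc.mul hf''c).integrable_of_hasCompactSupport hs''.mul_left
  have h2 : Integrable (fun x : ℝ => (starRingEnd ℂ) (deriv f x) * deriv f x) :=
    (hconj'c.mul hf'c).integrable_of_hasCompactSupport hs'.mul_left
  have h3 : Integrable (fun x : ℝ => (starRingEnd ℂ) (f x) * deriv f x) :=
    (hconjc.mul hf'c).integrable_of_hasCompactSupport hs'.mul_left
  have h := integral_mul_deriv_eq_deriv_mul_of_integrable (fun x _ => hu x) (fun x _ => hv x) h1 h2 h3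
  have hL := integral_re (𝕜 := ℂ) h1
  have hR := integral_re (𝕜 := ℂ) h2
  simp only [RCLike.re_eq_complex_re] at hL hR
  calc ∫ x : ℝ, ((starRingEnd ℂ) (f x) * deriv (deriv f) x).re
      = (∫ x : ℝ, (starRingEnd ℂ) (f x) * deriv (deriv f) x).re := hL
    _ = (-∫ x : ℝ, (starRingEnd ℂ) (deriv f x) * deriv f x).re := by rw [h]
    _ = -(∫ x : ℝ, (starRingEnd ℂ) (deriv f x) * deriv f x).re := by
          rw [Complex.neg_re]
    _ = -∫ x : ℝ, ((starRingEnd ℂ) (deriv f x) * deriv f x).re := by rw [hR]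
    _ = -∫ x : ℝ, ‖deriv f x‖ ^ 2 := by
          congr 1; exact integral_congr_ae (Eventually.of_forall fun x => conj_mul_self_re _)

end Stmt15Aux

open Stmt15Aux Set in
set_option maxHeartbeats 1000000 in
/-- the a priori estimate for the ordinary differential operator `A_τ` in
the weighted Sobolev norms: for `|τ| ≥ 1` and `f ∈ C²_0`,
`∫ [w⁻²|f''|² + |f'|² + w²|f|²] ≤ C ∫ |A_τ f|² w⁻²`. -/
theorem stmt15 (p q : ℕ) (hp : 1 ≤ p) (hpq : p ≤ q) :
    ∃ C : ℝ, ∀ τ : Fin 2 → ℝ, 1 ≤ Real.sqrt (τ 0 ^ 2 + τ 1 ^ 2) →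
      ∀ f : ℝ → ℂ, ContDiff ℝ 2 f → HasCompactSupport f →
        (∫ x : ℝ, ((wfun p q x τ)⁻¹ ^ 2 * ‖deriv (deriv f) x‖ ^ 2
            + ‖deriv f x‖ ^ 2 + wfun p q x τ ^ 2 * ‖f x‖ ^ 2)) ≤
          C * ∫ x : ℝ, ‖Atau p q τ f x‖ ^ 2 * (wfun p q x τ)⁻¹ ^ 2 := by
  refine ⟨4000, fun τ hτ f hf hs => ?_⟩
  have hq : 1 ≤ q := le_trans hp hpq
  -- smoothness facts
  have hfc : Continuous f := hf.continuous
  have hf1 : ContDiff ℝ 1 f := hf.of_le (by norm_num)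
  have hdiff : Differentiable ℝ f := hf1.differentiable one_ne_zero
  have hf11 : ContDiff ℝ (1 + 1) f := by rw [one_add_one_eq_two]; exact hf
  have hfd1 : ContDiff ℝ 1 (deriv f) := (contDiff_succ_iff_deriv.mp hf11).2.2
  have hf'c : Continuous (deriv f) := hfd1.continuous
  have hd2 : Differentiable ℝ (deriv f) := hfd1.differentiable one_ne_zero
  have hf''c : Continuous (deriv (deriv f)) := hfd1.continuous_deriv le_rfl
  have hs' : HasCompactSupport (deriv f) := hs.deriv
  have hs'' : HasCompactSupport (deriv (deriv f)) := hs'.deriv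
  -- τ is nonzero
  have hτ0 : τ 0 ≠ 0 ∨ τ 1 ≠ 0 := by
    by_contra h
    push_neg at h
    rw [h.1, h.2] at hτ
    norm_num at hτ
  -- basic objects
  set V : ℝ → ℝ := fun x => τ 0 ^ 2 * x ^ (2 * (p - 1)) + τ 1 ^ 2 * x ^ (2 * (q - 1)) with hVdef
  set B : ℝ := |τ 0| ^ ((2:ℝ) / p) + |τ 1| ^ ((2:ℝ) / q) with hBdef
  have hVc : Continuous V := by fun_prop
  have hV0 : ∀ x, 0 ≤ V x := fun x => add_nonneg
    (mul_nonneg (sq_nonneg _) ((even_two_mul _).pow_nonneg x))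
    (mul_nonneg (sq_nonneg _) ((even_two_mul _).pow_nonneg x))
  have hB0 : 0 < B := by
    have h1 : (0:ℝ) ≤ |τ 0| ^ ((2:ℝ) / p) := Real.rpow_nonneg (abs_nonneg _) _
    have h2 : (0:ℝ) ≤ |τ 1| ^ ((2:ℝ) / q) := Real.rpow_nonneg (abs_nonneg _) _
    rcases hτ0 with h | h
    · have := Real.rpow_pos_of_pos (abs_pos.mpr h) ((2:ℝ) / p)
      rw [hBdef]; linarith
    · have := Real.rpow_pos_of_pos (abs_pos.mpr h) ((2:ℝ) / q)
      rw [hBdef]; linarith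
  have hS : ∀ x : ℝ, 0 < |τ 0| ^ ((2 : ℝ) / p) + τ 0 ^ 2 * x ^ (2 * (p - 1))
      + |τ 1| ^ ((2 : ℝ) / q) + τ 1 ^ 2 * x ^ (2 * (q - 1)) := by
    intro x
    have h : 0 ≤ τ 0 ^ 2 * x ^ (2 * (p - 1)) + τ 1 ^ 2 * x ^ (2 * (q - 1)) := hV0 x
    have hb : 0 < |τ 0| ^ ((2:ℝ) / p) + |τ 1| ^ ((2:ℝ) / q) := hB0
    linarith
  set W : ℝ → ℝ := fun x => wfun p q x τ with hWdef
  have hWpos : ∀ x, 0 < W x := fun x => Real.sqrt_pos.mpr (hS x)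
  have hW2 : ∀ x, W x ^ 2 = B + V x := by
    intro x
    have h := Real.sq_sqrt (hS x).le
    calc W x ^ 2 = |τ 0| ^ ((2 : ℝ) / p) + τ 0 ^ 2 * x ^ (2 * (p - 1))
        + |τ 1| ^ ((2 : ℝ) / q) + τ 1 ^ 2 * x ^ (2 * (q - 1)) := h
      _ = B + V x := by rw [hBdef, hVdef]; ring
  have hWc : Continuous W := by
    have : Continuous fun x : ℝ => |τ 0| ^ ((2 : ℝ) / p) + τ 0 ^ 2 * x ^ (2 * (p - 1))
        + |τ 1| ^ ((2 : ℝ) / q) + τ 1 ^ 2 * x ^ (2 * (q - 1)) := by fun_prop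
    exact Real.continuous_sqrt.comp this
  have hWinvc : Continuous fun x => (W x)⁻¹ := hWc.inv₀ fun x => (hWpos x).ne'
  -- the operator
  set Af : ℝ → ℂ := Atau p q τ f with hAfdef
  have hAfeq : ∀ x, Af x = deriv (deriv f) x - (V x : ℂ) * f x := fun x => rfl
  have hAfc : Continuous Af := by
    rw [show Af = fun x => deriv (deriv f) x - (V x : ℂ) * f x from funext hAfeq]
    exact hf''c.sub ((Complex.continuous_ofReal.comp hVc).mul hfc)
  have hAfs : HasCompactSupport Af := by
    rw [show Af = (fun x => deriv (deriv f) x) + fun x => -((V x : ℂ) * f x) from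
      funext fun x => by simp [hAfeq x, sub_eq_add_neg]]
    exact hs''.add (HasCompactSupport.neg hs.mul_left)
  -- integrability
  have hNint : Integrable (fun x : ℝ => ‖f x‖ ^ 2) := integrable_sq hfc hs
  have hDint : Integrable (fun x : ℝ => ‖deriv f x‖ ^ 2) := integrable_sq hf'c hs'
  have hTVint : Integrable (fun x : ℝ => V x * ‖f x‖ ^ 2) := integrable_csq hVc hfc hs
  have hI3int : Integrable (fun x : ℝ => W x ^ 2 * ‖f x‖ ^ 2) :=
    integrable_csq (hWc.pow 2) hfc hs
  have hI1int : Integrable (fun x : ℝ => (W x)⁻¹ ^ 2 * ‖deriv (deriv f) x‖ ^ 2) :=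
    integrable_csq (hWinvc.pow 2) hf''c hs''
  have hRint : Integrable (fun x : ℝ => ‖Af x‖ ^ 2 * (W x)⁻¹ ^ 2) := by
    have h := integrable_csq (hWinvc.pow 2) hAfc hAfs
    simpa [mul_comm] using h
  have hTpint : Integrable (fun x : ℝ => x ^ (2 * (p - 1)) * ‖f x‖ ^ 2) :=
    integrable_csq (by fun_prop) hfc hs
  have hTqint : Integrable (fun x : ℝ => x ^ (2 * (q - 1)) * ‖f x‖ ^ 2) :=
    integrable_csq (by fun_prop) hfc hs
  have hcfAf : Integrable (fun x : ℝ => ((starRingEnd ℂ) (f x) * Af x).re) := by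
    apply Continuous.integrable_of_hasCompactSupport
    · exact Complex.continuous_re.comp ((continuous_star.comp hfc).mul hAfc)
    · exact (hAfs.mul_left).comp_left (g := Complex.re) (by simp)
  have hcf'' : Integrable (fun x : ℝ => ((starRingEnd ℂ) (f x) * deriv (deriv f) x).re) := by
    apply Continuous.integrable_of_hasCompactSupport
    · exact Complex.continuous_re.comp ((continuous_star.comp hfc).mul hf''c)
    · exact (hs''.mul_left).comp_left (g := Complex.re) (by simp)
  -- abbreviations
  set N : ℝ := ∫ x : ℝ, ‖f x‖ ^ 2 with hNdef
  set D : ℝ := ∫ x : ℝ, ‖deriv f x‖ ^ 2 with hDdef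
  set TV : ℝ := ∫ x : ℝ, V x * ‖f x‖ ^ 2 with hTVdef
  set I3 : ℝ := ∫ x : ℝ, W x ^ 2 * ‖f x‖ ^ 2 with hI3def
  set I1 : ℝ := ∫ x : ℝ, (W x)⁻¹ ^ 2 * ‖deriv (deriv f) x‖ ^ 2 with hI1def
  set R : ℝ := ∫ x : ℝ, ‖Af x‖ ^ 2 * (W x)⁻¹ ^ 2 with hRdef
  have hTV0 : 0 ≤ TV := integral_nonneg fun x => mul_nonneg (hV0 x) (by positivity)
  have hD0 : 0 ≤ D := integral_nonneg fun x => by positivity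
  have hR0 : 0 ≤ R := integral_nonneg fun x => by positivity
  -- Poincaré inequality in scaled form
  have hcastp : ((p - 1 : ℕ) : ℝ) + 1 = (p : ℝ) := by
    have h : p - 1 + 1 = p := Nat.succ_pred_eq_of_pos hp
    exact_mod_cast congrArg (Nat.cast (R := ℝ)) h
  have hcastq : ((q - 1 : ℕ) : ℝ) + 1 = (q : ℝ) := by
    have h : q - 1 + 1 = q := Nat.succ_pred_eq_of_pos hq
    exact_mod_cast congrArg (Nat.cast (R := ℝ)) h
  have hP1 := poincare_scaled hf1 hs (p - 1) (τ 0)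
  have hP2 := poincare_scaled hf1 hs (q - 1) (τ 1)
  rw [hcastp] at hP1
  rw [hcastq] at hP2
  have hTVsplit : TV = τ 0 ^ 2 * (∫ x : ℝ, x ^ (2 * (p - 1)) * ‖f x‖ ^ 2)
      + τ 1 ^ 2 * (∫ x : ℝ, x ^ (2 * (q - 1)) * ‖f x‖ ^ 2) := by
    rw [hTVdef]
    have h : (fun x : ℝ => V x * ‖f x‖ ^ 2) = fun x : ℝ =>
        τ 0 ^ 2 * (x ^ (2 * (p - 1)) * ‖f x‖ ^ 2)
          + τ 1 ^ 2 * (x ^ (2 * (q - 1)) * ‖f x‖ ^ 2) := by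
      funext x; rw [hVdef]; ring
    rw [h, integral_add (hTpint.const_mul _) (hTqint.const_mul _),
      integral_const_mul, integral_const_mul]
  have hBN : B * N ≤ 32 * D + 6 * TV := by
    have hexp : B * N = |τ 0| ^ ((2:ℝ) / p) * N + |τ 1| ^ ((2:ℝ) / q) * N := by
      rw [hBdef]; ring
    rw [hexp, hTVsplit]
    linarith [hP1, hP2]
  -- integration by parts identity
  have hibp := ibp hfc hdiff hf'c hd2 hf''c hs
  have hEeq : D + TV = - ∫ x : ℝ, ((starRingEnd ℂ) (f x) * Af x).re := by
    have hptE : ∀ x : ℝ, ((starRingEnd ℂ) (f x) * Af x).re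
        = ((starRingEnd ℂ) (f x) * deriv (deriv f) x).re - V x * ‖f x‖ ^ 2 := by
      intro x
      rw [hAfeq x]
      exact conj_mul_sub_re _ _ _
    have h : ∫ x : ℝ, ((starRingEnd ℂ) (f x) * Af x).re
        = (∫ x : ℝ, ((starRingEnd ℂ) (f x) * deriv (deriv f) x).re)
          - ∫ x : ℝ, V x * ‖f x‖ ^ 2 := by
      simp only [hptE]
      exact integral_sub hcf'' hTVint
    rw [h, hibp]
    rw [hDdef, hTVdef]
    ring
  -- Cauchy-Schwarz with AM-GM
  have hbound : ∀ x : ℝ, -((starRingEnd ℂ) (f x) * Af x).re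
      ≤ 16 * (‖Af x‖ ^ 2 * (W x)⁻¹ ^ 2) + (1/64) * (W x ^ 2 * ‖f x‖ ^ 2) := by
    intro x
    have h1 : -((starRingEnd ℂ) (f x) * Af x).re ≤ ‖f x‖ * ‖Af x‖ := neg_conj_mul_re_le _ _
    have hw := hWpos x
    have hab : ‖f x‖ * ‖Af x‖ = (‖Af x‖ * (W x)⁻¹) * (W x * ‖f x‖) := by
      field_simp
    have h2 : ‖f x‖ * ‖Af x‖ ≤ 16 * (‖Af x‖ * (W x)⁻¹) ^ 2 + (1/64) * (W x * ‖f x‖) ^ 2 := by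
      rw [hab]
      nlinarith [sq_nonneg (4 * (‖Af x‖ * (W x)⁻¹) - (W x * ‖f x‖) / 8)]
    calc -((starRingEnd ℂ) (f x) * Af x).re ≤ ‖f x‖ * ‖Af x‖ := h1
      _ ≤ 16 * (‖Af x‖ * (W x)⁻¹) ^ 2 + (1/64) * (W x * ‖f x‖) ^ 2 := h2
      _ = 16 * (‖Af x‖ ^ 2 * (W x)⁻¹ ^ 2) + (1/64) * (W x ^ 2 * ‖f x‖ ^ 2) := by ring
  have hE2 : D + TV ≤ 16 * R + (1/64) * I3 := by
    have hmono : ∫ x : ℝ, -((starRingEnd ℂ) (f x) * Af x).re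
        ≤ ∫ x : ℝ, (16 * (‖Af x‖ ^ 2 * (W x)⁻¹ ^ 2) + (1/64) * (W x ^ 2 * ‖f x‖ ^ 2)) :=
      integral_mono hcfAf.neg ((hRint.const_mul _).add (hI3int.const_mul _)) hbound
    rw [integral_neg] at hmono
    rw [integral_add (hRint.const_mul _) (hI3int.const_mul _), integral_const_mul,
      integral_const_mul] at hmono
    rw [hEeq]
    rw [hRdef, hI3def]
    exact hmono
  have hI3eq : I3 = B * N + TV := by
    rw [hI3def]
    have h : (fun x : ℝ => W x ^ 2 * ‖f x‖ ^ 2)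
        = fun x : ℝ => B * ‖f x‖ ^ 2 + V x * ‖f x‖ ^ 2 := by
      funext x; rw [hW2 x]; ring
    rw [h, integral_add (hNint.const_mul _) hTVint, integral_const_mul]
  have hI3le : I3 ≤ 32 * (D + TV) := by rw [hI3eq]; linarith
  have hEle : D + TV ≤ 32 * R := by linarith
  have hI3R : I3 ≤ 1024 * R := by linarith
  have hDR : D ≤ 32 * R := by linarith
  -- second-derivative term
  have hptI1 : ∀ x : ℝ, (W x)⁻¹ ^ 2 * ‖deriv (deriv f) x‖ ^ 2
      ≤ 2 * (‖Af x‖ ^ 2 * (W x)⁻¹ ^ 2) + 2 * (W x ^ 2 * ‖f x‖ ^ 2) := by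
    intro x
    have hw := hWpos x
    have htri : ‖deriv (deriv f) x‖ ≤ ‖Af x‖ + V x * ‖f x‖ := by
      have heq : deriv (deriv f) x = Af x + (V x : ℂ) * f x := by rw [hAfeq x]; ring
      rw [heq]
      refine le_trans (norm_add_le _ _) ?_
      have hnv : ‖((V x : ℝ) : ℂ)‖ = V x := by
        rw [Complex.norm_real, Real.norm_eq_abs]
        exact abs_of_nonneg (hV0 x)
      rw [norm_mul, hnv]
    have hVW : V x ≤ W x ^ 2 := by rw [hW2 x]; linarith
    have h2 : (W x)⁻¹ ^ 2 * (V x) ^ 2 ≤ W x ^ 2 := by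
      have heq : (W x)⁻¹ ^ 2 * (W x ^ 2) ^ 2 = W x ^ 2 := by
        field_simp
      calc (W x)⁻¹ ^ 2 * (V x) ^ 2 ≤ (W x)⁻¹ ^ 2 * (W x ^ 2) ^ 2 :=
            mul_le_mul_of_nonneg_left (pow_le_pow_left₀ (hV0 x) hVW 2) (by positivity)
        _ = W x ^ 2 := heq
    have hn2 : ‖deriv (deriv f) x‖ ^ 2 ≤ 2 * ‖Af x‖ ^ 2 + 2 * (V x) ^ 2 * ‖f x‖ ^ 2 := by
      nlinarith [mul_self_le_mul_self (norm_nonneg (deriv (deriv f) x)) htri,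
        sq_nonneg (‖Af x‖ - V x * ‖f x‖)]
    have h3 := mul_le_mul_of_nonneg_right h2 (sq_nonneg ‖f x‖)
    calc (W x)⁻¹ ^ 2 * ‖deriv (deriv f) x‖ ^ 2
        ≤ (W x)⁻¹ ^ 2 * (2 * ‖Af x‖ ^ 2 + 2 * (V x) ^ 2 * ‖f x‖ ^ 2) := by
          apply mul_le_mul_of_nonneg_left hn2 (by positivity)
      _ = 2 * (‖Af x‖ ^ 2 * (W x)⁻¹ ^ 2) + 2 * (((W x)⁻¹ ^ 2 * (V x) ^ 2) * ‖f x‖ ^ 2) := by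
          ring
      _ ≤ 2 * (‖Af x‖ ^ 2 * (W x)⁻¹ ^ 2) + 2 * (W x ^ 2 * ‖f x‖ ^ 2) := by
          linarith
  have hI1le : I1 ≤ 2 * R + 2 * I3 := by
    have hmono : (∫ x : ℝ, (W x)⁻¹ ^ 2 * ‖deriv (deriv f) x‖ ^ 2)
        ≤ ∫ x : ℝ, (2 * (‖Af x‖ ^ 2 * (W x)⁻¹ ^ 2) + 2 * (W x ^ 2 * ‖f x‖ ^ 2)) :=
      integral_mono hI1int ((hRint.const_mul 2).add (hI3int.const_mul 2)) hptI1
    rw [integral_add (hRint.const_mul 2) (hI3int.const_mul 2), integral_const_mul,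
      integral_const_mul] at hmono
    rw [hI1def, hRdef, hI3def]
    exact hmono
  -- assemble
  have hLHS : ∫ x : ℝ, ((W x)⁻¹ ^ 2 * ‖deriv (deriv f) x‖ ^ 2
      + ‖deriv f x‖ ^ 2 + W x ^ 2 * ‖f x‖ ^ 2) = I1 + D + I3 := by
    have hIDint : Integrable (fun x : ℝ =>
        (W x)⁻¹ ^ 2 * ‖deriv (deriv f) x‖ ^ 2 + ‖deriv f x‖ ^ 2) := hI1int.add hDint
    rw [integral_add hIDint hI3int, integral_add hI1int hDint]
  show ∫ x : ℝ, ((W x)⁻¹ ^ 2 * ‖deriv (deriv f) x‖ ^ 2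
      + ‖deriv f x‖ ^ 2 + W x ^ 2 * ‖f x‖ ^ 2) ≤ 4000 * R
  rw [hLHS]
  linarith
end

section
/- Let 1 ≤ p ≤ q be integers and let R > 0. There is a constant C such that for every x ∈ ℝ with |x| ≤ R and every τ = (τ₁, τ₂) ∈ ℝ² with |τ| ≥ 1, |τ|^{p/q} (|x|^{p−1} + |x|^{q−1}) ≤ C w(x, τ). -/
open MeasureTheory Complex

/-- the weight inequality `|τ|^{p/q}(|x|^{p-1} + |x|^{q-1}) ≤ C w(x,τ)` for
`|x| ≤ R` and `|τ| ≥ 1`. -/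
theorem stmt16 (p q : ℕ) (hp : 1 ≤ p) (hpq : p ≤ q) (R : ℝ) (hR : 0 < R) :
    ∃ C : ℝ, ∀ x : ℝ, |x| ≤ R → ∀ τ : Fin 2 → ℝ, 1 ≤ Real.sqrt (τ 0 ^ 2 + τ 1 ^ 2) →
      Real.sqrt (τ 0 ^ 2 + τ 1 ^ 2) ^ ((p : ℝ) / q) * (|x| ^ (p - 1) + |x| ^ (q - 1)) ≤
        C * wfun p q x τ := by
  have hq : 1 ≤ q := hp.trans hpq
  have hq0 : (0:ℝ) < q := by exact_mod_cast hq
  have hp0 : (0:ℝ) < p := by exact_mod_cast hp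
  have hpqR : (p:ℝ) ≤ q := by exact_mod_cast hpq
  set M : ℝ := max 1 R with hMdef
  have hM1 : (1:ℝ) ≤ M := le_max_left _ _
  have hM0 : (0:ℝ) ≤ M := by linarith
  have hMq : (1:ℝ) ≤ M ^ (q - p) := one_le_pow₀ hM1
  have h2a : (1:ℝ) ≤ Real.sqrt 2 := by
    nlinarith [Real.sq_sqrt (show (0:ℝ) ≤ 2 by norm_num), Real.sqrt_nonneg 2]
  have h2b : (0:ℝ) ≤ Real.sqrt 2 := Real.sqrt_nonneg 2
  refine ⟨Real.sqrt 2 * M ^ (q - p) * (1 + M ^ (q - p)), ?_⟩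
  intro x hx τ hτ
  set s := Real.sqrt (τ 0 ^ 2 + τ 1 ^ 2) with hsdef
  have hs1 : (1:ℝ) ≤ s := hτ
  have hs0 : (0:ℝ) < s := lt_of_lt_of_le one_pos hτ
  have hxM : |x| ≤ M := le_trans hx (le_max_right _ _)
  have hx0 : (0:ℝ) ≤ |x| := abs_nonneg x
  set w := wfun p q x τ with hwdef
  -- the four quantities dominated by w
  have ha0 : (0:ℝ) ≤ |τ 0| ^ ((1:ℝ)/p) := Real.rpow_nonneg (abs_nonneg _) _
  have hb0 : (0:ℝ) ≤ |τ 0| * |x| ^ (p-1) := mul_nonneg (abs_nonneg _) (pow_nonneg hx0 _)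
  have hc0 : (0:ℝ) ≤ |τ 1| ^ ((1:ℝ)/q) := Real.rpow_nonneg (abs_nonneg _) _
  have hd0 : (0:ℝ) ≤ |τ 1| * |x| ^ (q-1) := mul_nonneg (abs_nonneg _) (pow_nonneg hx0 _)
  have ha2 : |τ 0| ^ ((2:ℝ)/(p:ℕ)) = (|τ 0| ^ ((1:ℝ)/p)) ^ 2 := by
    rw [← Real.rpow_natCast (|τ 0| ^ ((1:ℝ)/p)) 2, ← Real.rpow_mul (abs_nonneg _)]
    congr 1
    ring
  have hc2 : |τ 1| ^ ((2:ℝ)/(q:ℕ)) = (|τ 1| ^ ((1:ℝ)/q)) ^ 2 := by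
    rw [← Real.rpow_natCast (|τ 1| ^ ((1:ℝ)/q)) 2, ← Real.rpow_mul (abs_nonneg _)]
    congr 1
    ring
  have e0 : τ 0 ^ 2 * x ^ (2 * (p - 1)) = (|τ 0| * |x| ^ (p - 1)) ^ 2 := by
    rw [mul_pow, _root_.sq_abs, ← pow_mul, mul_comm (p-1) 2, (even_two_mul (p-1)).pow_abs]
  have e1 : τ 1 ^ 2 * x ^ (2 * (q - 1)) = (|τ 1| * |x| ^ (q - 1)) ^ 2 := by
    rw [mul_pow, _root_.sq_abs, ← pow_mul, mul_comm (q-1) 2, (even_two_mul (q-1)).pow_abs]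
  have hwsq : w = Real.sqrt ((|τ 0| ^ ((1:ℝ)/p)) ^ 2 + (|τ 0| * |x| ^ (p-1)) ^ 2
      + (|τ 1| ^ ((1:ℝ)/q)) ^ 2 + (|τ 1| * |x| ^ (q-1)) ^ 2) := by
    rw [hwdef]; unfold wfun; rw [ha2, hc2, e0, e1]
  have hw0 : 0 ≤ w := by rw [hwsq]; exact Real.sqrt_nonneg _
  have hMW : Real.sqrt 2 * w ≤ Real.sqrt 2 * M ^ (q-p) * w := by
    calc Real.sqrt 2 * w = 1 * (Real.sqrt 2 * w) := (one_mul _).symm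
      _ ≤ M ^ (q-p) * (Real.sqrt 2 * w) := mul_le_mul_of_nonneg_right hMq (mul_nonneg h2b hw0)
      _ = Real.sqrt 2 * M ^ (q-p) * w := by ring
  have wbound : ∀ t : ℝ, 0 ≤ t →
      t ^ 2 ≤ (|τ 0| ^ ((1:ℝ)/p)) ^ 2 + (|τ 0| * |x| ^ (p-1)) ^ 2
        + (|τ 1| ^ ((1:ℝ)/q)) ^ 2 + (|τ 1| * |x| ^ (q-1)) ^ 2 → t ≤ w := by
    intro t ht hle
    rw [hwsq]
    calc t = Real.sqrt (t ^ 2) := (Real.sqrt_sq ht).symm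
      _ ≤ _ := Real.sqrt_le_sqrt hle
  have hwa : |τ 0| ^ ((1:ℝ)/p) ≤ w := wbound _ ha0 (by linarith [sq_nonneg (|τ 0| * |x| ^ (p-1)), sq_nonneg (|τ 1| ^ ((1:ℝ)/q)), sq_nonneg (|τ 1| * |x| ^ (q-1))])
  have hwb : |τ 0| * |x| ^ (p-1) ≤ w := wbound _ hb0 (by linarith [sq_nonneg (|τ 0| ^ ((1:ℝ)/p)), sq_nonneg (|τ 1| ^ ((1:ℝ)/q)), sq_nonneg (|τ 1| * |x| ^ (q-1))])
  have hwc : |τ 1| ^ ((1:ℝ)/q) ≤ w := wbound _ hc0 (by linarith [sq_nonneg (|τ 0| ^ ((1:ℝ)/p)), sq_nonneg (|τ 0| * |x| ^ (p-1)), sq_nonneg (|τ 1| * |x| ^ (q-1))])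
  have hwd : |τ 1| * |x| ^ (q-1) ≤ w := wbound _ hd0 (by linarith [sq_nonneg (|τ 0| ^ ((1:ℝ)/p)), sq_nonneg (|τ 0| * |x| ^ (p-1)), sq_nonneg (|τ 1| ^ ((1:ℝ)/q))])
  -- s ≤ √2 · max
  have hmax : s ≤ Real.sqrt 2 * max (|τ 0|) (|τ 1|) := by
    have hm0 : (0:ℝ) ≤ max (|τ 0|) (|τ 1|) := le_trans (abs_nonneg _) (le_max_left _ _)
    have h0 : τ 0 ^ 2 ≤ (max (|τ 0|) (|τ 1|)) ^ 2 := by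
      rw [← _root_.sq_abs (τ 0)]; exact pow_le_pow_left₀ (abs_nonneg _) (le_max_left _ _) 2
    have h1 : τ 1 ^ 2 ≤ (max (|τ 0|) (|τ 1|)) ^ 2 := by
      rw [← _root_.sq_abs (τ 1)]; exact pow_le_pow_left₀ (abs_nonneg _) (le_max_right _ _) 2
    calc s ≤ Real.sqrt (2 * (max (|τ 0|) (|τ 1|)) ^ 2) := Real.sqrt_le_sqrt (by linarith)
      _ = Real.sqrt 2 * max (|τ 0|) (|τ 1|) := by
          rw [Real.sqrt_mul (by norm_num), Real.sqrt_sq hm0]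
  have hoq1 : (1:ℝ)/q ≤ 1 := by rw [div_le_one hq0]; exact_mod_cast hq
  -- s^{1/q} ≤ √2 w
  have hsq2w : s ^ ((1:ℝ)/q) ≤ Real.sqrt 2 * w := by
    rcases le_total (|τ 0|) (|τ 1|) with hc | hc
    · have hsb : s ≤ Real.sqrt 2 * |τ 1| := by rwa [max_eq_right hc] at hmax
      calc s ^ ((1:ℝ)/q) ≤ (Real.sqrt 2 * |τ 1|) ^ ((1:ℝ)/q) :=
            Real.rpow_le_rpow hs0.le hsb (by positivity)
        _ = Real.sqrt 2 ^ ((1:ℝ)/q) * |τ 1| ^ ((1:ℝ)/q) := Real.mul_rpow h2b (abs_nonneg _)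
        _ ≤ Real.sqrt 2 * (|τ 1| ^ ((1:ℝ)/q)) := by
            have := Real.rpow_le_rpow_of_exponent_le h2a hoq1
            rw [Real.rpow_one] at this
            exact mul_le_mul_of_nonneg_right this hc0
        _ ≤ Real.sqrt 2 * w := mul_le_mul_of_nonneg_left hwc h2b
    · have hsb : s ≤ Real.sqrt 2 * |τ 0| := by rwa [max_eq_left hc] at hmax
      have hop1 : (1:ℝ)/p ≤ 1 := by rw [div_le_one hp0]; exact_mod_cast hp
      have hqp : (1:ℝ)/q ≤ (1:ℝ)/p := one_div_le_one_div_of_le hp0 hpqR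
      calc s ^ ((1:ℝ)/q) ≤ s ^ ((1:ℝ)/p) := Real.rpow_le_rpow_of_exponent_le hs1 hqp
        _ ≤ (Real.sqrt 2 * |τ 0|) ^ ((1:ℝ)/p) := Real.rpow_le_rpow hs0.le hsb (by positivity)
        _ = Real.sqrt 2 ^ ((1:ℝ)/p) * |τ 0| ^ ((1:ℝ)/p) := Real.mul_rpow h2b (abs_nonneg _)
        _ ≤ Real.sqrt 2 * (|τ 0| ^ ((1:ℝ)/p)) := by
            have := Real.rpow_le_rpow_of_exponent_le h2a hop1
            rw [Real.rpow_one] at this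
            exact mul_le_mul_of_nonneg_right this ha0
        _ ≤ Real.sqrt 2 * w := mul_le_mul_of_nonneg_left hwa h2b
  have hcastp : ((p - 1 : ℕ) : ℝ) = (p:ℝ) - 1 := by
    rw [Nat.cast_sub hp]; norm_num
  have hcastqp : ((q - p : ℕ) : ℝ) = (q:ℝ) - p := by
    rw [Nat.cast_sub hpq]
  have hxsplit : |x| ^ (q-1) ≤ M ^ (q-p) * |x| ^ (p-1) := by
    have h' : |x| ^ (q-1) = |x| ^ (q-p) * |x| ^ (p-1) := by
      rw [← pow_add]; congr 1; omega
    rw [h']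
    exact mul_le_mul_of_nonneg_right (pow_le_pow_left₀ hx0 hxM _) (pow_nonneg hx0 _)
  -- KEY: s^{p/q} |x|^{p-1} ≤ √2 M^{q-p} w
  have hkey : s ^ ((p:ℝ)/q) * |x| ^ (p-1) ≤ Real.sqrt 2 * M ^ (q-p) * w := by
    rcases le_total (s ^ ((1:ℝ)/q) * |x|) 1 with h | h
    · -- small x
      have decomp : s ^ ((p:ℝ)/q) * |x| ^ (p-1)
          = s ^ ((1:ℝ)/q) * (s ^ ((1:ℝ)/q) * |x|) ^ (p-1) := by
        rw [mul_pow, ← Real.rpow_natCast (s ^ ((1:ℝ)/q)) (p-1),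
          ← Real.rpow_mul hs0.le, hcastp, ← mul_assoc, ← Real.rpow_add hs0]
        congr 2
        field_simp
        ring
      have h1 : (s ^ ((1:ℝ)/q) * |x|) ^ (p-1) ≤ 1 := pow_le_one₀ (by positivity) h
      calc s ^ ((p:ℝ)/q) * |x| ^ (p-1)
          = s ^ ((1:ℝ)/q) * (s ^ ((1:ℝ)/q) * |x|) ^ (p-1) := decomp
        _ ≤ s ^ ((1:ℝ)/q) * 1 := mul_le_mul_of_nonneg_left h1 (by positivity)
        _ = s ^ ((1:ℝ)/q) := mul_one _
        _ ≤ Real.sqrt 2 * w := hsq2w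
        _ ≤ Real.sqrt 2 * M ^ (q-p) * w := hMW
    · -- large x
      have step1 : s ^ ((p:ℝ)/q) * |x| ^ (p-1) ≤ s * |x| ^ (q-1) := by
        have decomp2 : s * |x| ^ (q-1)
            = s ^ ((p:ℝ)/q) * |x| ^ (p-1) * (s ^ ((1:ℝ)/q) * |x|) ^ (q-p) := by
          rw [mul_pow, ← Real.rpow_natCast (s ^ ((1:ℝ)/q)) (q-p),
            ← Real.rpow_mul hs0.le, hcastqp]
          have hxp : |x| ^ (p-1) * |x| ^ (q-p) = |x| ^ (q-1) := by
            rw [← pow_add]; congr 1; omega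
          have hsp : s ^ ((p:ℝ)/q) * s ^ ((1:ℝ)/q * ((q:ℝ) - p)) = s := by
            rw [← Real.rpow_add hs0]
            have : (p:ℝ)/q + (1:ℝ)/q * ((q:ℝ) - p) = 1 := by field_simp; ring
            rw [this, Real.rpow_one]
          symm
          calc s ^ ((p:ℝ)/q) * |x| ^ (p-1) * (s ^ ((1:ℝ)/q * ((q:ℝ) - p)) * |x| ^ (q-p))
              = (s ^ ((p:ℝ)/q) * s ^ ((1:ℝ)/q * ((q:ℝ) - p))) * (|x| ^ (p-1) * |x| ^ (q-p)) := by ring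
            _ = s * |x| ^ (q-1) := by rw [hsp, hxp]
        rw [decomp2]
        exact le_mul_of_one_le_right (by positivity) (one_le_pow₀ h)
      have step2 : s * |x| ^ (q-1) ≤ Real.sqrt 2 * M ^ (q-p) * w := by
        rcases le_total (|τ 0|) (|τ 1|) with hc | hc
        · have hsb : s ≤ Real.sqrt 2 * |τ 1| := by rwa [max_eq_right hc] at hmax
          calc s * |x| ^ (q-1) ≤ (Real.sqrt 2 * |τ 1|) * |x| ^ (q-1) :=
                mul_le_mul_of_nonneg_right hsb (pow_nonneg hx0 _)
            _ = Real.sqrt 2 * (|τ 1| * |x| ^ (q-1)) := by ring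
            _ ≤ Real.sqrt 2 * w := mul_le_mul_of_nonneg_left hwd h2b
            _ ≤ Real.sqrt 2 * M ^ (q-p) * w := hMW
        · have hsb : s ≤ Real.sqrt 2 * |τ 0| := by rwa [max_eq_left hc] at hmax
          calc s * |x| ^ (q-1) ≤ s * (M ^ (q-p) * |x| ^ (p-1)) :=
                mul_le_mul_of_nonneg_left hxsplit hs0.le
            _ ≤ (Real.sqrt 2 * |τ 0|) * (M ^ (q-p) * |x| ^ (p-1)) :=
                mul_le_mul_of_nonneg_right hsb (by positivity)
            _ = Real.sqrt 2 * M ^ (q-p) * (|τ 0| * |x| ^ (p-1)) := by ring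
            _ ≤ Real.sqrt 2 * M ^ (q-p) * w :=
                mul_le_mul_of_nonneg_left hwb (by positivity)
      exact step1.trans step2
  -- conclude
  have hsp0 : (0:ℝ) ≤ s ^ ((p:ℝ)/q) := Real.rpow_nonneg hs0.le _
  calc s ^ ((p:ℝ)/q) * (|x| ^ (p-1) + |x| ^ (q-1))
      = s ^ ((p:ℝ)/q) * |x| ^ (p-1) + s ^ ((p:ℝ)/q) * |x| ^ (q-1) := by ring
    _ ≤ s ^ ((p:ℝ)/q) * |x| ^ (p-1) + s ^ ((p:ℝ)/q) * (M ^ (q-p) * |x| ^ (p-1)) := by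
        have := mul_le_mul_of_nonneg_left hxsplit hsp0
        linarith
    _ = (1 + M ^ (q-p)) * (s ^ ((p:ℝ)/q) * |x| ^ (p-1)) := by ring
    _ ≤ (1 + M ^ (q-p)) * (Real.sqrt 2 * M ^ (q-p) * w) :=
        mul_le_mul_of_nonneg_left hkey (by positivity)
    _ = Real.sqrt 2 * M ^ (q-p) * (1 + M ^ (q-p)) * w := by ring
end

section
/- For every R > 0 there is a constant C such that for every real μ ≥ 1, every integer k ≥ 1, and every x ∈ ℝ with |x| ≤ R, the k-th derivative of the Gaussian f(x) = e^{−μx²} satisfies |f^{(k)}(x)| ≤ C^{k+1} μ^{k/2} k^{k/2}. -/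
open MeasureTheory Complex

section AuxStmt18

lemma aux_ofReal_comp (f : ℝ → ℝ) (hf : ContDiff ℝ ((⊤ : ℕ∞) : WithTop ℕ∞) f) (k : ℕ) :
    iteratedDeriv k (fun y : ℝ => ((f y : ℝ) : ℂ)) = fun y => ((iteratedDeriv k f y : ℝ) : ℂ) := by
  induction k generalizing f with
  | zero => simp [iteratedDeriv_zero]
  | succ k ih =>
    rw [iteratedDeriv_succ', iteratedDeriv_succ']
    have h1 : (deriv fun y : ℝ => ((f y : ℝ) : ℂ)) = fun y => ((deriv f y : ℝ) : ℂ) := by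
      funext y
      exact (((hf.differentiable (by simp)) y).hasDerivAt.ofReal_comp).deriv
    rw [h1, ih _ (contDiff_infty_iff_deriv.mp hf).2]

lemma aux_comp_ofReal (g : ℂ → ℂ) (hg : Differentiable ℂ g) (k : ℕ) (x : ℝ) :
    iteratedDeriv k (fun y : ℝ => g y) x = iteratedDeriv k g x := by
  induction k generalizing g with
  | zero => simp
  | succ k ih =>
    rw [iteratedDeriv_succ', iteratedDeriv_succ']
    have h1 : (deriv fun y : ℝ => g y) = fun y : ℝ => deriv g y := by
      funext y; exact ((hg y).hasDerivAt.comp_ofReal).deriv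
    have h2 : Differentiable ℂ (deriv g) := fun z =>
      (((hg.differentiableOn.analyticOnNhd isOpen_univ).deriv) z
        (Set.mem_univ z)).differentiableAt
    rw [h1, ih _ h2]

lemma aux_cauchy (g : ℂ → ℂ) (hg : Differentiable ℂ g) (x : ℂ) (k : ℕ) (r M : ℝ) (hr : 0 < r)
    (hM : ∀ θ : ℝ, ‖g (circleMap x r θ)‖ ≤ M) :
    ‖iteratedDeriv k g x‖ ≤ k.factorial * M * r⁻¹ ^ k := by
  have hM0 : 0 ≤ M := le_trans (norm_nonneg _) (hM 0)
  set p := cauchyPowerSeries g x r with hp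
  have hps : HasFPowerSeriesOnBall g p x ⊤ := by
    have := hg.hasFPowerSeriesOnBall x (R := r.toNNReal) (by simpa using hr)
    rwa [Real.coe_toNNReal r hr.le] at this
  have h1 : ((Nat.factorial k) : ℕ) • (p k fun _ => (1 : ℂ)) = iteratedFDeriv ℂ k g x fun _ => 1 :=
    hps.factorial_smul (y := (1 : ℂ)) k
  have h2 : iteratedDeriv k g x = ((Nat.factorial k) : ℂ) * (p k fun _ => 1) := by
    rw [iteratedDeriv_eq_iteratedFDeriv, ← h1, nsmul_eq_mul]
  rw [h2]
  rw [norm_mul]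
  have h3 : ‖((Nat.factorial k) : ℂ)‖ = ((Nat.factorial k) : ℝ) := by
    rw [Complex.norm_natCast]
  rw [h3]
  have h4 : ‖p k fun _ => (1 : ℂ)‖ ≤ ‖p k‖ := by
    calc ‖p k fun _ => (1 : ℂ)‖ ≤ ‖p k‖ * ∏ _i : Fin k, ‖(1 : ℂ)‖ := (p k).le_opNorm _
      _ = ‖p k‖ := by simp
  have h5 : ‖p k‖ ≤ M * r⁻¹ ^ k := by
    refine le_trans (norm_cauchyPowerSeries_le g x r k) ?_
    rw [abs_of_pos hr]
    refine mul_le_mul_of_nonneg_right ?_ (pow_nonneg (inv_nonneg.mpr hr.le) k)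
    have hint : (∫ θ : ℝ in (0)..2 * Real.pi, ‖g (circleMap x r θ)‖) ≤ 2 * Real.pi * M := by
      have := intervalIntegral.integral_mono_on (a := 0) (b := 2 * Real.pi)
        (f := fun θ => ‖g (circleMap x r θ)‖) (g := fun _ => M) Real.two_pi_pos.le
        ((hg.continuous.comp (continuous_circleMap x r)).norm.intervalIntegrable 0 (2 * Real.pi))
        (intervalIntegrable_const (μ := MeasureTheory.volume)) (fun θ _ => hM θ)
      simpa using this
    calc (2 * Real.pi)⁻¹ * ∫ θ : ℝ in (0)..2 * Real.pi, ‖g (circleMap x r θ)‖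
        ≤ (2 * Real.pi)⁻¹ * (2 * Real.pi * M) := by
          gcongr
      _ = M := by field_simp
  calc ((Nat.factorial k) : ℝ) * ‖p k fun _ => (1 : ℂ)‖ ≤ ((Nat.factorial k) : ℝ) * (M * r⁻¹ ^ k) := by
        gcongr
        exact le_trans h4 h5
    _ = ((Nat.factorial k) : ℝ) * M * r⁻¹ ^ k := by ring

end AuxStmt18

/-- on-diagonal derivative bounds for the Gaussian: for every `R > 0` there
is `C` with `|(d/dx)^k e^{-μx²}| ≤ C^{k+1} μ^{k/2} k^{k/2}` for `μ ≥ 1`, `k ≥ 1`, `|x| ≤ R`. -/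
theorem stmt18 (R : ℝ) (hR : 0 < R) :
    ∃ C : ℝ, ∀ μ : ℝ, 1 ≤ μ → ∀ k : ℕ, 1 ≤ k → ∀ x : ℝ, |x| ≤ R →
      |iteratedDeriv k (fun y : ℝ => Real.exp (-μ * y ^ 2)) x| ≤
        C ^ (k + 1) * μ ^ ((k : ℝ) / 2) * (k : ℝ) ^ ((k : ℝ) / 2) := by

  refine ⟨Real.exp 1, fun μ hμ k hk x _ => ?_⟩
  have hμ0 : (0:ℝ) < μ := lt_of_lt_of_le one_pos hμ
  have hk0 : (0:ℝ) < (k:ℝ) := by exact_mod_cast hk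
  set g : ℂ → ℂ := fun z => Complex.exp (-(μ:ℂ) * z ^ 2) with hgdef
  have hg : Differentiable ℂ g := ((differentiable_const _).mul (differentiable_pow 2)).cexp
  set r : ℝ := Real.sqrt ((k:ℝ) / μ) with hrdef
  have hrsq : r ^ 2 = (k:ℝ) / μ := Real.sq_sqrt (div_pos hk0 hμ0).le
  have hr : 0 < r := Real.sqrt_pos.mpr (div_pos hk0 hμ0)
  have hf : ContDiff ℝ ((⊤ : ℕ∞) : WithTop ℕ∞) (fun y : ℝ => Real.exp (-μ * y ^ 2)) := by
    have h0 : ContDiff ℝ ((⊤ : ℕ∞) : WithTop ℕ∞) (fun y : ℝ => -μ * y ^ 2) := by fun_prop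
    exact Real.contDiff_exp.comp h0
  have heq : (fun y : ℝ => g y) = fun y : ℝ => ((Real.exp (-μ * y ^ 2) : ℝ) : ℂ) := by
    funext y
    simp only [hgdef, Complex.ofReal_exp]
    congr 1
    push_cast
    ring
  have habs : |iteratedDeriv k (fun y : ℝ => Real.exp (-μ * y ^ 2)) x| = ‖iteratedDeriv k g x‖ := by
    rw [← aux_comp_ofReal g hg k x, heq, aux_ofReal_comp _ hf k, Complex.norm_real]
    exact (Real.norm_eq_abs _).symm
  rw [habs]
  have hM : ∀ θ : ℝ, ‖g (circleMap (x:ℂ) r θ)‖ ≤ Real.exp k := by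
    intro θ
    set z := circleMap (x:ℂ) r θ with hz
    have hnorm : ‖g z‖ = Real.exp ((-(μ:ℂ) * z ^ 2).re) := by
      simp [hgdef, Complex.norm_exp]
    have him : z.im = r * Real.sin θ := by
      simp [hz, circleMap]
    have hre : (-(μ:ℂ) * z ^ 2).re = -μ * (z.re ^ 2 - z.im ^ 2) := by
      simp [pow_two, Complex.mul_re, Complex.mul_im]
      try ring
    rw [hnorm, Real.exp_le_exp, hre]
    have h1 : z.im ^ 2 ≤ r ^ 2 := by
      rw [him, mul_pow]
      have : Real.sin θ ^ 2 ≤ 1 := Real.sin_sq_le_one θ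
      nlinarith [sq_nonneg r]
    have h2 : μ * (r ^ 2) = (k:ℝ) := by
      rw [hrsq]; field_simp
    nlinarith [sq_nonneg z.re, hμ0]
  have key := aux_cauchy g hg x k r (Real.exp k) hr hM
  refine le_trans key ?_
  -- now pure computation
  have h6 : r⁻¹ ^ k = (μ / k) ^ ((k:ℝ)/2) := by
    have : r⁻¹ = Real.sqrt (μ / k) := by
      rw [hrdef, ← Real.sqrt_inv, inv_div]
    rw [this, Real.sqrt_eq_rpow, ← Real.rpow_natCast ((μ / k) ^ ((1:ℝ)/2)) k,
      ← Real.rpow_mul (div_pos hμ0 hk0).le]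
    congr 1
    ring
  have h7 : (μ / k) ^ ((k:ℝ)/2) = μ ^ ((k:ℝ)/2) / (k:ℝ) ^ ((k:ℝ)/2) :=
    Real.div_rpow hμ0.le hk0.le _
  have h8 : ((Nat.factorial k) : ℝ) ≤ (k:ℝ) ^ ((k:ℝ)) := by
    rw [Real.rpow_natCast]
    exact_mod_cast Nat.factorial_le_pow k
  have h9 : Real.exp k ≤ Real.exp 1 ^ (k + 1) := by
    have : Real.exp (k:ℝ) = Real.exp 1 ^ k := by
      rw [← Real.exp_nat_mul]; norm_num
    rw [this]
    exact pow_le_pow_right₀ (Real.one_le_exp (by norm_num)) (Nat.le_succ k)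
  have h10 : (k:ℝ) ^ ((k:ℝ)) / (k:ℝ) ^ ((k:ℝ)/2) = (k:ℝ) ^ ((k:ℝ)/2) := by
    rw [← Real.rpow_sub hk0]
    congr 1
    ring
  calc ((Nat.factorial k) : ℝ) * Real.exp k * r⁻¹ ^ k
      = ((Nat.factorial k) : ℝ) * Real.exp k * (μ ^ ((k:ℝ)/2) / (k:ℝ) ^ ((k:ℝ)/2)) := by rw [h6, h7]
    _ ≤ (k:ℝ) ^ ((k:ℝ)) * Real.exp 1 ^ (k + 1) * (μ ^ ((k:ℝ)/2) / (k:ℝ) ^ ((k:ℝ)/2)) := by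
        have hpos : 0 ≤ μ ^ ((k:ℝ)/2) / (k:ℝ) ^ ((k:ℝ)/2) := by positivity
        exact mul_le_mul_of_nonneg_right
          (mul_le_mul h8 h9 (Real.exp_pos _).le (by positivity)) hpos
    _ = Real.exp 1 ^ (k + 1) * μ ^ ((k:ℝ)/2) * ((k:ℝ) ^ ((k:ℝ)) / (k:ℝ) ^ ((k:ℝ)/2)) := by ring
    _ = Real.exp 1 ^ (k + 1) * μ ^ ((k:ℝ)/2) * (k:ℝ) ^ ((k:ℝ)/2) := by rw [h10]
end

section
/- For all 0 < r < R there are constants C and δ > 0 such that for every real μ ≥ 1, every integer k ≥ 0, and every x ∈ ℝ with r ≤ |x| ≤ R, the k-th derivative of the Gaussian f(x) = e^{−μx²} satisfies |f^{(k)}(x)| ≤ C^{k+1} k^k e^{−δμ} (with the convention 0⁰ = 1). -/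
open MeasureTheory Complex

private lemma entire_iteratedDeriv {g : ℂ → ℂ} (hg : Differentiable ℂ g) (k : ℕ) :
    Differentiable ℂ (iteratedDeriv k g) := by
  induction k with
  | zero => simpa using hg
  | succ n ih =>
    rw [iteratedDeriv_succ]
    have : AnalyticOnNhd ℂ (iteratedDeriv n g) Set.univ :=
      ih.differentiableOn.analyticOnNhd isOpen_univ
    exact (differentiableOn_univ.mp this.deriv.differentiableOn)

private lemma ofReal_comp_iteratedDeriv {g : ℂ → ℂ} (hg : Differentiable ℂ g) (k : ℕ) :
    ∀ x : ℝ, iteratedDeriv k (fun y : ℝ => g y) x = iteratedDeriv k g x := by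
  induction k with
  | zero => intro x; simp
  | succ n ih =>
    intro x
    rw [iteratedDeriv_succ, iteratedDeriv_succ]
    have hfun : (iteratedDeriv n fun y : ℝ => g y) = fun y : ℝ => iteratedDeriv n g y :=
      funext fun y => ih y
    rw [hfun]
    exact (((entire_iteratedDeriv hg n (x : ℂ)).hasDerivAt).comp_ofReal).deriv

private lemma cauchy_bound {g : ℂ → ℂ} (hg : Differentiable ℂ g) (c : ℂ) (ρ M : ℝ)
    (hρ : 0 < ρ) (hM : ∀ z : ℂ, dist z c = ρ → ‖g z‖ ≤ M) (k : ℕ) :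
    ‖iteratedDeriv k g c‖ ≤ ((Nat.factorial k) : ℝ) * M * ρ⁻¹ ^ k := by
  set ρ' := (⟨ρ, hρ.le⟩ : NNReal) with hρ'
  have hρc : (ρ' : ℝ) = ρ := rfl
  have h := hg.hasFPowerSeriesOnBall c (R := ρ') (by exact_mod_cast hρ)
  set p := cauchyPowerSeries g c ρ' with hp
  have h1 : iteratedDeriv k g c = (Nat.factorial k) • p k (fun _ => (1 : ℂ)) := by
    rw [iteratedDeriv_eq_iteratedFDeriv, ← h.factorial_smul (1 : ℂ) k]
    rfl
  have h2 : ‖p k (fun _ => (1 : ℂ))‖ ≤ ‖p k‖ := by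
    calc ‖p k (fun _ => (1 : ℂ))‖ ≤ ‖p k‖ * ∏ _i : Fin k, ‖(1 : ℂ)‖ :=
          (p k).le_opNorm _
      _ = ‖p k‖ := by simp
  have hint : ∫ θ : ℝ in (0)..2 * Real.pi, ‖g (circleMap c ρ' θ)‖ ≤ 2 * Real.pi * M := by
    have hle : ∀ θ ∈ Set.Icc (0 : ℝ) (2 * Real.pi), ‖g (circleMap c ρ' θ)‖ ≤ M := by
      intro θ _
      apply hM
      have h0 := circleMap_mem_sphere c (R := ρ) hρ.le θ
      rw [Metric.mem_sphere] at h0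
      simpa [hρc] using h0
    calc ∫ θ : ℝ in (0)..2 * Real.pi, ‖g (circleMap c ρ' θ)‖
        ≤ ∫ _θ : ℝ in (0)..2 * Real.pi, M := by
          apply intervalIntegral.integral_mono_on Real.two_pi_pos.le _
            (intervalIntegrable_const) hle
          exact ((hg.continuous.comp (continuous_circleMap _ _)).norm).intervalIntegrable _ _
      _ = 2 * Real.pi * M := by simp [mul_comm]
  have h3 : ‖p k‖ ≤ M * ρ⁻¹ ^ k := by
    have := norm_cauchyPowerSeries_le g c ρ' k
    rw [hρc, abs_of_pos hρ] at this
    refine this.trans ?_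
    apply mul_le_mul_of_nonneg_right _ (by positivity)
    calc (2 * Real.pi)⁻¹ * ∫ θ : ℝ in (0)..2 * Real.pi, ‖g (circleMap c ρ' θ)‖
        ≤ (2 * Real.pi)⁻¹ * (2 * Real.pi * M) :=
          mul_le_mul_of_nonneg_left hint (by positivity)
      _ = M := by field_simp
  rw [h1, ← Nat.cast_smul_eq_nsmul ℝ, norm_smul, Real.norm_natCast]
  calc ((Nat.factorial k) : ℝ) * ‖p k (fun _ => (1 : ℂ))‖ ≤ ((Nat.factorial k) : ℝ) * ‖p k‖ :=
        mul_le_mul_of_nonneg_left h2 (by positivity)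
    _ ≤ ((Nat.factorial k) : ℝ) * (M * ρ⁻¹ ^ k) := mul_le_mul_of_nonneg_left h3 (by positivity)
    _ = ((Nat.factorial k) : ℝ) * M * ρ⁻¹ ^ k := by ring

/-- off-diagonal derivative bounds for the Gaussian: for `0 < r < R` there
are `C` and `δ > 0` with `|(d/dx)^k e^{-μx²}| ≤ C^{k+1} k^k e^{-δμ}` for `μ ≥ 1`, `k ≥ 0`
and `r ≤ |x| ≤ R` (with the convention `0⁰ = 1`). -/
theorem stmt19 (r R : ℝ) (hr : 0 < r) (hrR : r < R) :
    ∃ C δ : ℝ, 0 < δ ∧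
      ∀ μ : ℝ, 1 ≤ μ → ∀ k : ℕ, ∀ x : ℝ, r ≤ |x| → |x| ≤ R →
        |iteratedDeriv k (fun y : ℝ => Real.exp (-μ * y ^ 2)) x| ≤
          C ^ (k + 1) * (k : ℝ) ^ (k : ℝ) * Real.exp (-δ * μ) := by
  refine ⟨max 1 (4 / r), r ^ 2 / 2, by positivity, ?_⟩
  intro μ hμ k x hxr hxR
  set C : ℝ := max 1 (4 / r) with hCdef
  have hC1 : (1 : ℝ) ≤ C := le_max_left _ _
  have hC4 : 4 / r ≤ C := le_max_right _ _
  have hC0 : 0 < C := lt_of_lt_of_le one_pos hC1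
  set g : ℂ → ℂ := fun z => Complex.exp (-(μ : ℂ) * z ^ 2) with hgdef
  have hg : Differentiable ℂ g := ((differentiable_pow 2).const_mul _).cexp
  have heq : (fun y : ℝ => ((Real.exp (-μ * y ^ 2) : ℝ) : ℂ)) = fun y : ℝ => g (y : ℂ) := by
    funext y
    rw [hgdef, Complex.ofReal_exp]
    push_cast
    ring_nf
  have hM : ∀ z : ℂ, dist z (x : ℂ) = r / 4 → ‖g z‖ ≤ Real.exp (-(r ^ 2 / 2) * μ) := by
    intro z hz
    have habs : ‖z - x‖ = r / 4 := by rwa [Complex.dist_eq] at hz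
    have ha : |z.re - x| ≤ r / 4 := by
      have := Complex.abs_re_le_norm (z - x)
      simpa [habs] using this
    have hb : |z.im| ≤ r / 4 := by
      have := Complex.abs_im_le_norm (z - x)
      simpa [habs] using this
    have hre1 : 3 * r / 4 ≤ |z.re| := by
      have h1 : |x| - |z.re| ≤ |x - z.re| := abs_sub_abs_le_abs_sub _ _
      rw [abs_sub_comm] at h1
      have := abs_sub_comm z.re x
      nlinarith [abs_nonneg (z.re - x)]
    have hre2 : (3 * r / 4) ^ 2 ≤ z.re ^ 2 := by
      rw [← _root_.sq_abs z.re]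
      exact pow_le_pow_left₀ (by positivity) hre1 2
    have him2 : z.im ^ 2 ≤ (r / 4) ^ 2 := by
      rw [← _root_.sq_abs z.im]
      exact pow_le_pow_left₀ (abs_nonneg _) hb 2
    have hzre : r ^ 2 / 2 ≤ (z ^ 2).re := by
      have : (z ^ 2).re = z.re ^ 2 - z.im ^ 2 := by
        simp [pow_two, Complex.mul_re]
      rw [this]
      nlinarith
    have hnorm : ‖g z‖ = Real.exp ((-(μ : ℂ) * z ^ 2).re) := by
      rw [hgdef]
      simp [Complex.norm_exp]
    rw [hnorm]
    apply Real.exp_le_exp.mpr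
    have hre : (-(μ : ℂ) * z ^ 2).re = -μ * (z ^ 2).re := by
      simp [Complex.mul_re]
    rw [hre]
    nlinarith [hzre, hμ]
  have key := cauchy_bound hg (x : ℂ) (r / 4) (Real.exp (-(r ^ 2 / 2) * μ))
    (by positivity) hM k
  have hnorm : |iteratedDeriv k (fun y : ℝ => Real.exp (-μ * y ^ 2)) x|
      = ‖iteratedDeriv k g (x : ℂ)‖ := by
    rw [← ofReal_comp_iteratedDeriv hg k x, ← heq]
    rw [← Real.norm_eq_abs, ← norm_iteratedFDeriv_eq_norm_iteratedDeriv,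
      ← norm_iteratedFDeriv_eq_norm_iteratedDeriv]
    have hf : ContDiff ℝ (⊤ : ℕ∞) (fun y : ℝ => Real.exp (-μ * y ^ 2)) :=
      by fun_prop
    have := Complex.ofRealLI.norm_iteratedFDeriv_comp_left (hf.contDiffAt (x := x)) (i := k) (mod_cast le_top)
    exact this.symm
  rw [hnorm]
  refine key.trans ?_
  have hE : (0 : ℝ) < Real.exp (-(r ^ 2 / 2) * μ) := Real.exp_pos _
  rcases Nat.eq_zero_or_pos k with rfl | hk
  · simp only [Nat.factorial_zero, Nat.cast_one, pow_zero, one_mul, mul_one, Nat.cast_zero,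
      Real.rpow_zero, pow_one]
    nlinarith
  · rw [Real.rpow_natCast]
    have hfact : ((Nat.factorial k) : ℝ) ≤ (k : ℝ) ^ k := by exact_mod_cast Nat.factorial_le_pow k
    have hinv : ((r / 4)⁻¹ : ℝ) ^ k ≤ C ^ k := by
      apply pow_le_pow_left₀ (by positivity)
      rw [inv_div]
      exact hC4
    calc ((Nat.factorial k) : ℝ) * Real.exp (-(r ^ 2 / 2) * μ) * (r / 4)⁻¹ ^ k
        ≤ (k : ℝ) ^ k * Real.exp (-(r ^ 2 / 2) * μ) * C ^ k := by
          apply mul_le_mul (mul_le_mul_of_nonneg_right hfact hE.le) hinv (by positivity)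
            (by positivity)
      _ ≤ (k : ℝ) ^ k * Real.exp (-(r ^ 2 / 2) * μ) * C ^ (k + 1) := by
          apply mul_le_mul_of_nonneg_left (pow_le_pow_right₀ hC1 (Nat.le_succ k))
            (by positivity)
      _ = C ^ (k + 1) * (k : ℝ) ^ k * Real.exp (-(r ^ 2 / 2) * μ) := by ring
end
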